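/- arXiv:0812.0189 — 2 statements merged into one kernel-verified Lean document; each statement's English description precedes it below -/
import Mathlib

section
/- Let A be a separable C*-algebra. Suppose that for every finite family x_1, ..., x_n of self-adjoint elements of A, every ε > 0, and every finite family of noncommutative *-polynomials P_1, ..., P_r in n variables, there exist a positive integer k and self-adjoint matrices A_1, ..., A_n ∈ M_k(ℂ) such that |‖P_j(x_1,...,x_n)‖ − ‖P_j(A_1,...,A_n)‖| ≤ ε for all j. Then A embeds into the quotient C*-algebra (∏_k M_{n_k}(ℂ)) / (⊕_k M_{n_k}(ℂ)) for some sequence of positive integers n_k (i.e., A is an MF algebra). -/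
noncomputable section

open Filter TopologicalSpace

/-- The C*-algebra `M_m(ℂ)` realized as bounded operators on `ℂ^m`. -/
abbrev MatCStar (m : ℕ) := EuclideanSpace ℂ (Fin m) →L[ℂ] EuclideanSpace ℂ (Fin m)

/-- A sequence of matrices lying in `⊕_k M_{n_k}(ℂ)`, i.e. a null sequence. -/
def IsNullSeq {n : ℕ → ℕ} (f : ∀ k, MatCStar (n k)) : Prop :=
  Tendsto (fun k => ‖f k‖) atTop (nhds 0)

/-- `A` is an MF algebra: there is an injective `*`-homomorphism from `A` into
`∏_k M_{n_k}(ℂ) / ⊕_k M_{n_k}(ℂ)` for some sequence of positive integers `(n_k)`.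
Equivalently (choosing a set-theoretic lift of such an embedding), there is a map `Φ` from
`A` to bounded sequences of matrices which is additive, multiplicative, `ℂ`-homogeneous and
star-preserving modulo null sequences, and which maps only `0` to a null sequence. -/
def IsMF (A : Type) [NonUnitalNormedRing A] [StarRing A] [NormedSpace ℂ A] : Prop :=
  ∃ n : ℕ → ℕ, (∀ k, 0 < n k) ∧
    ∃ Φ : A → ∀ k, MatCStar (n k),
      (∀ a, ∃ C : ℝ, ∀ k, ‖Φ a k‖ ≤ C) ∧
      (∀ a b, IsNullSeq (Φ (a + b) - (Φ a + Φ b))) ∧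
      (∀ a b, IsNullSeq (Φ (a * b) - Φ a * Φ b)) ∧
      (∀ (c : ℂ) (a : A), IsNullSeq (Φ (c • a) - c • Φ a)) ∧
      (∀ a, IsNullSeq (Φ (star a) - star (Φ a))) ∧
      (∀ a, IsNullSeq (Φ a) → a = 0)

/-! ### Auxiliary polynomial machinery -/

/-- linear generator polynomial: evaluates at selfadjoint pairs to `x_{2m} + i x_{2m+1}`. -/
def Lp (m : ℕ) : FreeAlgebra ℂ ℕ :=
  FreeAlgebra.ι ℂ (2*m) + Complex.I • FreeAlgebra.ι ℂ (2*m+1)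

def Sp (m : ℕ) : FreeAlgebra ℂ ℕ :=
  FreeAlgebra.ι ℂ (2*m) - Complex.I • FreeAlgebra.ι ℂ (2*m+1)

/-- dense sequence in ℂ -/
def qc (s : ℕ) : ℂ := denseSeq ℂ s

def Ftup : ℕ × ℕ × ℕ × ℕ × ℕ → FreeAlgebra ℂ ℕ
  | (0, m, _, _, _) => Lp m
  | (1, m, m', m'', _) => Lp m'' - Lp m - Lp m'
  | (2, m, m', m'', _) => Lp m'' - Lp m * Lp m'
  | (3, m, _, m'', s) => Lp m'' - qc s • Lp m
  | (4, m, _, m'', _) => Lp m'' - Sp m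
  | _ => 0

def enc (p : ℕ × ℕ × ℕ × ℕ × ℕ) : ℕ := Encodable.encode p

def Qp (j : ℕ) : FreeAlgebra ℂ ℕ := Ftup (Denumerable.ofNat _ j)

lemma Qp_enc (p : ℕ × ℕ × ℕ × ℕ × ℕ) : Qp (enc p) = Ftup p := by
  simp only [Qp, enc, Denumerable.ofNat_encode]

/-- bound function for codes -/
def Cb (K : ℕ) : ℕ :=
  K + 1 + ((Finset.range 5) ×ˢ (Finset.range (K+1)) ×ˢ (Finset.range (K+1)) ×ˢ
    (Finset.range (K+1)) ×ˢ (Finset.range (K+1))).sup enc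

lemma lt_Cb {t a b c e K : ℕ} (ht : t < 5) (ha : a ≤ K) (hb : b ≤ K) (hc : c ≤ K)
    (he : e ≤ K) : enc (t, a, b, c, e) < Cb K := by
  have hmem : (t, a, b, c, e) ∈ (Finset.range 5) ×ˢ (Finset.range (K+1)) ×ˢ
      (Finset.range (K+1)) ×ˢ (Finset.range (K+1)) ×ˢ (Finset.range (K+1)) := by
    simp [Finset.mem_product, Nat.lt_succ_iff, ht, ha, hb, hc, he]
  have := Finset.le_sup (f := enc) hmem
  unfold Cb; omega

lemma self_lt_Cb (K : ℕ) : K < Cb K := by unfold Cb; omega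

lemma Cb_mono : Monotone Cb := by
  intro K K' hK
  unfold Cb
  have : ((Finset.range 5) ×ˢ (Finset.range (K+1)) ×ˢ (Finset.range (K+1)) ×ˢ
      (Finset.range (K+1)) ×ˢ (Finset.range (K+1))).sup enc ≤
      ((Finset.range 5) ×ˢ (Finset.range (K'+1)) ×ˢ (Finset.range (K'+1)) ×ˢ
      (Finset.range (K'+1)) ×ˢ (Finset.range (K'+1))).sup enc := by
    apply Finset.sup_mono
    apply Finset.product_subset_product_right
    apply Finset.product_subset_product (Finset.range_subset_range.2 (by omega))
    apply Finset.product_subset_product (Finset.range_subset_range.2 (by omega))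
    exact Finset.product_subset_product (Finset.range_subset_range.2 (by omega))
      (Finset.range_subset_range.2 (by omega))
  omega

/-- truncation hom from ℕ-variables to Fin n variables -/
def trunc (n : ℕ) : FreeAlgebra ℂ ℕ →ₐ[ℂ] FreeAlgebra ℂ (Fin n) :=
  FreeAlgebra.lift ℂ (fun i => if h : i < n then FreeAlgebra.ι ℂ (⟨i, h⟩ : Fin n) else 0)

/-- extend a Fin-indexed family by zero -/
def ext0 {B : Type*} [Zero B] {n : ℕ} (w : Fin n → B) : ℕ → B :=
  fun i => if h : i < n then w ⟨i, h⟩ else 0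

lemma lift_trunc {B : Type*} [Ring B] [Algebra ℂ B] {n : ℕ} (w : Fin n → B)
    (p : FreeAlgebra ℂ ℕ) :
    FreeAlgebra.lift ℂ w (trunc n p) = FreeAlgebra.lift ℂ (ext0 w) p := by
  have : (FreeAlgebra.lift ℂ w).comp (trunc n) = FreeAlgebra.lift ℂ (ext0 w) := by
    apply FreeAlgebra.hom_ext
    funext i
    simp only [Function.comp_apply, AlgHom.coe_comp, trunc, FreeAlgebra.lift_ι_apply, ext0]
    split <;> simp
  exact AlgHom.congr_fun this p

lemma lift_Lp {B : Type*} [Ring B] [Algebra ℂ B] (u : ℕ → B) (m : ℕ) :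
    FreeAlgebra.lift ℂ u (Lp m) = u (2*m) + Complex.I • u (2*m+1) := by
  simp [Lp, map_add, map_smul, FreeAlgebra.lift_ι_apply]

lemma lift_Sp {B : Type*} [Ring B] [Algebra ℂ B] (u : ℕ → B) (m : ℕ) :
    FreeAlgebra.lift ℂ u (Sp m) = u (2*m) - Complex.I • u (2*m+1) := by
  simp [Sp, map_sub, map_smul, FreeAlgebra.lift_ι_apply]

/-! ### Index-selection machinery -/

def goodSet (C : ℕ → ℕ) (s : ℕ → ℕ) (N : ℕ) : Finset ℕ :=
  (Finset.range (N+1)).filter (fun j => C (s j) ≤ N)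

def jIdx (C : ℕ → ℕ) (s : ℕ → ℕ) (N : ℕ) : ℕ :=
  if h : (goodSet C s N).Nonempty then (goodSet C s N).max' h else 0

lemma jIdx_ok {C s : ℕ → ℕ} {N : ℕ} (h0 : C (s 0) ≤ N) : C (s (jIdx C s N)) ≤ N := by
  have hmem : 0 ∈ goodSet C s N := by simp [goodSet, h0]
  have hne : (goodSet C s N).Nonempty := ⟨0, hmem⟩
  have : jIdx C s N ∈ goodSet C s N := by
    rw [jIdx, dif_pos hne]; exact Finset.max'_mem _ hne
  simpa [goodSet] using (Finset.mem_filter.1 this).2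

lemma le_jIdx {C s : ℕ → ℕ} {N J : ℕ} (hJ : J ≤ N) (hC : C (s J) ≤ N) : J ≤ jIdx C s N := by
  have hmem : J ∈ goodSet C s N := by simp [goodSet, hJ, hC, Nat.lt_succ_iff]
  have hne : (goodSet C s N).Nonempty := ⟨J, hmem⟩
  rw [jIdx, dif_pos hne]
  exact Finset.le_max' _ _ hmem

lemma tendsto_jIdx (C s : ℕ → ℕ) : Tendsto (fun N => jIdx C s N) atTop atTop := by
  rw [tendsto_atTop]
  intro J
  filter_upwards [eventually_ge_atTop J, eventually_ge_atTop (C (s J))] with N h1 h2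
  exact le_jIdx h1 h2

/-! ### Main theorem -/

set_option maxHeartbeats 3200000 in
set_option synthInstance.maxHeartbeats 800000 in
/-- If a (unital) separable C*-algebra `A` satisfies the matricial norm-microstate
condition — for all self-adjoint `x_1, …, x_n ∈ A`, `ε > 0` and noncommutative polynomials
`P_1, …, P_r ∈ ℂ⟨X_1, …, X_n⟩` there are `k` and self-adjoint `A_1, …, A_n ∈ M_k(ℂ)` with
`|‖P_j(x)‖ − ‖P_j(A)‖| ≤ ε` for all `j` — then `A` is an MF algebra, i.e. `A` embeds into
`∏_k M_{n_k}(ℂ) / ⊕_k M_{n_k}(ℂ)` for some sequence `(n_k)`. -/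
theorem isMF_of_matrix_norm_approximation
    (A : Type) [CStarAlgebra A] [SeparableSpace A]
    (h : ∀ (n : ℕ) (x : Fin n → A), (∀ i, IsSelfAdjoint (x i)) →
      ∀ ε : ℝ, 0 < ε → ∀ (r : ℕ) (P : Fin r → FreeAlgebra ℂ (Fin n)),
        ∃ k : ℕ, 0 < k ∧ ∃ M : Fin n → MatCStar k, (∀ i, IsSelfAdjoint (M i)) ∧
          ∀ j : Fin r,
            |‖FreeAlgebra.lift ℂ x (P j)‖ - ‖FreeAlgebra.lift ℂ M (P j)‖| ≤ ε) :
    IsMF A := by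
  have hne : Nonempty A := ⟨0⟩
  -- a dense sequence together with self-adjoint "coordinates"
  obtain ⟨d, z, hd, hz_sa, hdm, hzstar⟩ :
      ∃ (d : ℕ → A) (z : ℕ → A), DenseRange d ∧ (∀ i, IsSelfAdjoint (z i)) ∧
        (∀ m, z (2*m) + Complex.I • z (2*m+1) = d m) ∧
        (∀ m, z (2*m) - Complex.I • z (2*m+1) = star (d m)) := by
    refine ⟨denseSeq A, fun i => if i % 2 = 0 then (realPart (denseSeq A (i/2)) : A)
      else (imaginaryPart (denseSeq A (i/2)) : A), denseRange_denseSeq A, ?_, ?_, ?_⟩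
    · intro i; dsimp only; split
      · exact (realPart _).2
      · exact (imaginaryPart _).2
    · intro m
      have e1 : (2*m) % 2 = 0 := by omega
      have e2 : (2*m)/2 = m := by omega
      have e3 : (2*m+1) % 2 = 1 := by omega
      have e4 : (2*m+1)/2 = m := by omega
      simp only [e1, e2, e3, e4, if_pos rfl, if_neg (by omega : ¬ (1:ℕ) = 0)]
      exact realPart_add_I_smul_imaginaryPart _
    · intro m
      have e1 : (2*m) % 2 = 0 := by omega
      have e2 : (2*m)/2 = m := by omega
      have e3 : (2*m+1) % 2 = 1 := by omega
      have e4 : (2*m+1)/2 = m := by omega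
      simp only [e1, e2, e3, e4, if_pos rfl, if_neg (by omega : ¬ (1:ℕ) = 0)]
      conv_rhs => rw [← realPart_add_I_smul_imaginaryPart (denseSeq A m)]
      rw [star_add, star_smul, Complex.star_def, Complex.conj_I,
        (realPart _).2.star_eq, ((imaginaryPart _).2 : IsSelfAdjoint _).star_eq, neg_smul]
      abel_nf
      exact add_comm _ _
  -- choice of approximating indices
  have hsel' : ∀ (a : A) (j : ℕ), ∃ m, ‖a - d m‖ < 1/((j:ℝ)+1) := by
    intro a j
    obtain ⟨m, hm⟩ := Metric.denseRange_iff.1 hd a (1/((j:ℝ)+1)) (by positivity)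
    exact ⟨m, by rwa [dist_eq_norm] at hm⟩
  choose sel hsel using hsel'
  -- apply the hypothesis at each stage N
  choose k kpos M Msa hM using fun N : ℕ =>
    h (2*N+2) (fun i => z i.val) (fun i => hz_sa i.val) (1/((N:ℝ)+1)) (by positivity) N
      (fun j => trunc (2*N+2) (Qp j.val))
  -- the index of the chosen approximant of `a` at stage `N`
  set κ : A → ℕ → ℕ := fun a N => sel a (jIdx Cb (sel a) N) with hκdef
  -- the approximate embedding
  set Φ : A → ∀ N, MatCStar (k N) := fun a N =>
    FreeAlgebra.lift ℂ (ext0 (M N)) (Lp (κ a N)) with hΦdef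
  -- basic eventual facts
  have hκok : ∀ a : A, ∀ᶠ N in atTop, Cb (κ a N) ≤ N := by
    intro a
    filter_upwards [eventually_ge_atTop (Cb (sel a 0))] with N hN
    exact jIdx_ok hN
  have hκd : ∀ (a : A) (N : ℕ), ‖a - d (κ a N)‖ ≤ 1/((jIdx Cb (sel a) N : ℝ)+1) :=
    fun a N => (hsel a _).le
  have hκ0 : ∀ a : A, Tendsto (fun N => ‖a - d (κ a N)‖) atTop (nhds 0) := by
    intro a
    apply squeeze_zero (fun N => norm_nonneg _) (fun N => hκd a N)
    exact tendsto_one_div_add_atTop_nhds_zero_nat.comp (tendsto_jIdx Cb (sel a))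
  have hmN : ∀ {m N : ℕ}, Cb m ≤ N → m < N := fun {m N} h' => lt_of_lt_of_le (self_lt_Cb _) h'
  -- transfer of the hypothesis bound
  have hM' : ∀ (N : ℕ) (p : ℕ × ℕ × ℕ × ℕ × ℕ), enc p < N →
      |‖FreeAlgebra.lift ℂ (ext0 (fun i : Fin (2*N+2) => z i.val)) (Ftup p)‖ -
        ‖FreeAlgebra.lift ℂ (ext0 (M N)) (Ftup p)‖| ≤ 1/((N:ℝ)+1) := by
    intro N p hp
    have := hM N ⟨enc p, hp⟩
    simpa only [Qp_enc, lift_trunc] using this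
  -- code bound
  have hcode : ∀ (t m m' m'' s N : ℕ), t < 5 → Cb m ≤ N → Cb m' ≤ N → Cb m'' ≤ N →
      Cb s ≤ N → enc (t, m, m', m'', s) < N := by
    intro t m m' m'' s N ht h1 h2 h3 h4
    calc enc (t, m, m', m'', s) < Cb (max m (max m' (max m'' s))) :=
          lt_Cb ht (le_max_left _ _)
            (le_trans (le_max_left _ _) (le_max_right _ _))
            (le_trans (le_trans (le_max_left _ _) (le_max_right _ _)) (le_max_right _ _))
            (le_trans (le_trans (le_max_right _ _) (le_max_right _ _)) (le_max_right _ _))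
      _ ≤ N := by
          rw [Cb_mono.map_max, Cb_mono.map_max, Cb_mono.map_max]
          exact max_le h1 (max_le h2 (max_le h3 h4))
  -- evaluation on the algebra side
  have hEL : ∀ (N m : ℕ), m < N →
      FreeAlgebra.lift ℂ (ext0 (fun i : Fin (2*N+2) => z i.val)) (Lp m) = d m := by
    intro N m hm
    rw [lift_Lp]
    have h1 : 2*m < 2*N+2 := by omega
    have h2 : 2*m+1 < 2*N+2 := by omega
    simp only [ext0, dif_pos h1, dif_pos h2]
    exact hdm m
  have hES : ∀ (N m : ℕ), m < N →
      FreeAlgebra.lift ℂ (ext0 (fun i : Fin (2*N+2) => z i.val)) (Sp m) = star (d m) := by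
    intro N m hm
    rw [lift_Sp]
    have h1 : 2*m < 2*N+2 := by omega
    have h2 : 2*m+1 < 2*N+2 := by omega
    simp only [ext0, dif_pos h1, dif_pos h2]
    exact hzstar m
  -- matrix side: star compatibility
  have hMsa' : ∀ (N : ℕ) (i : ℕ), IsSelfAdjoint (ext0 (M N) i) := by
    intro N i
    unfold ext0; split
    · exact Msa N _
    · exact (IsSelfAdjoint.zero (MatCStar (k N)))
  have hφS : ∀ (N m : ℕ), FreeAlgebra.lift ℂ (ext0 (M N)) (Sp m) =
      star (FreeAlgebra.lift ℂ (ext0 (M N)) (Lp m)) := by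
    intro N m
    rw [lift_Lp, lift_Sp, star_add (R := MatCStar (k N)), star_smul, Complex.star_def, Complex.conj_I,
      (hMsa' N (2*m)).star_eq, (hMsa' N (2*m+1)).star_eq, neg_smul]
    abel
  -- norm comparison for Φ
  have hub : ∀ a : A, ∀ᶠ N in atTop,
      ‖Φ a N‖ ≤ ‖d (κ a N)‖ + 1/((N:ℝ)+1) ∧ ‖d (κ a N)‖ ≤ ‖Φ a N‖ + 1/((N:ℝ)+1) := by
    intro a
    filter_upwards [hκok a, eventually_ge_atTop (Cb 0)] with N h1 h2
    have hc : enc (0, κ a N, 0, 0, 0) < N := hcode _ _ _ _ _ _ (by norm_num) h1 h2 h2 h2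
    have hh := hM' N _ hc
    rw [show Ftup (0, κ a N, 0, 0, 0) = Lp (κ a N) from rfl, hEL N _ (hmN h1)] at hh
    have habs := abs_le.1 hh
    constructor
    · simp only [hΦdef]; linarith [habs.1]
    · simp only [hΦdef]; linarith [habs.2]
  have hone : ∀ N : ℕ, 1/((N:ℝ)+1) ≤ 1 := by
    intro N
    rw [div_le_one (by positivity)]
    have : (0:ℝ) ≤ (N:ℝ) := Nat.cast_nonneg N
    linarith
  have hubound : ∀ a : A, ∀ᶠ N in atTop, ‖Φ a N‖ ≤ ‖a‖ + 2 := by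
    intro a
    filter_upwards [hub a, (hκ0 a).eventually_lt_const one_pos] with N h1 h2
    have h3 : ‖d (κ a N)‖ ≤ ‖a‖ + ‖a - d (κ a N)‖ := by
      have := norm_sub_norm_le (d (κ a N)) a
      have := norm_sub_rev (d (κ a N)) a
      linarith
    linarith [h1.1, hone N]
  refine ⟨k, kpos, Φ, ?_, ?_, ?_, ?_, ?_, ?_⟩
  · -- boundedness
    intro a
    obtain ⟨K, hK⟩ := eventually_atTop.1 (hubound a)
    refine ⟨‖a‖ + 2 + ∑ i ∈ Finset.range K, ‖Φ a i‖, fun N => ?_⟩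
    by_cases hN : N < K
    · have h1 : ‖Φ a N‖ ≤ ∑ i ∈ Finset.range K, ‖Φ a i‖ :=
        Finset.single_le_sum (f := fun i => ‖Φ a i‖) (fun i _ => norm_nonneg _)
          (Finset.mem_range.2 hN)
      have h2 : (0:ℝ) ≤ ‖a‖ + 2 := by positivity
      linarith
    · have h1 := hK N (le_of_not_gt hN)
      have h2 : (0:ℝ) ≤ ∑ i ∈ Finset.range K, ‖Φ a i‖ :=
        Finset.sum_nonneg fun i _ => norm_nonneg _
      linarith
  · -- additivity
    intro a b
    unfold IsNullSeq
    apply squeeze_zero' (g := fun N => ‖(a+b) - d (κ (a+b) N)‖ + ‖a - d (κ a N)‖ +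
      ‖b - d (κ b N)‖ + 1/((N:ℝ)+1)) (Eventually.of_forall fun N => norm_nonneg _)
    · filter_upwards [hκok a, hκok b, hκok (a+b), eventually_ge_atTop (Cb 0)]
        with N h1 h2 h3 h4
      have hc : enc (1, κ a N, κ b N, κ (a+b) N, 0) < N :=
        hcode _ _ _ _ _ _ (by norm_num) h1 h2 h3 h4
      have hh := hM' N _ hc
      rw [show Ftup (1, κ a N, κ b N, κ (a+b) N, 0) =
          Lp (κ (a+b) N) - Lp (κ a N) - Lp (κ b N) from rfl] at hh
      rw [map_sub, map_sub, map_sub, map_sub, hEL N _ (hmN h3), hEL N _ (hmN h1),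
        hEL N _ (hmN h2)] at hh
      have habs := (abs_le.1 hh).1
      have hkey : d (κ (a+b) N) - d (κ a N) - d (κ b N) =
          (d (κ (a+b) N) - (a+b)) + ((a - d (κ a N)) + (b - d (κ b N))) := by abel
      have hnorm1 : ‖d (κ (a+b) N) - d (κ a N) - d (κ b N)‖ ≤
          ‖(a+b) - d (κ (a+b) N)‖ + (‖a - d (κ a N)‖ + ‖b - d (κ b N)‖) := by
        rw [hkey]
        calc ‖_ + _‖ ≤ ‖d (κ (a+b) N) - (a+b)‖ + ‖(a - d (κ a N)) + (b - d (κ b N))‖ :=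
              norm_add_le _ _
          _ ≤ _ := by
              rw [norm_sub_rev]
              exact add_le_add_right (norm_add_le _ _) _
      have hgoal : (Φ (a+b) - (Φ a + Φ b)) N =
          FreeAlgebra.lift ℂ (ext0 (M N)) (Lp (κ (a+b) N)) -
          FreeAlgebra.lift ℂ (ext0 (M N)) (Lp (κ a N)) -
          FreeAlgebra.lift ℂ (ext0 (M N)) (Lp (κ b N)) := by
        simp only [Pi.sub_apply, Pi.add_apply, hΦdef, sub_add_eq_sub_sub]
      rw [hgoal]
      linarith
    · have := (((hκ0 (a+b)).add (hκ0 a)).add (hκ0 b)).add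
        tendsto_one_div_add_atTop_nhds_zero_nat
      simpa using this
  · -- multiplicativity
    intro a b
    unfold IsNullSeq
    apply squeeze_zero' (g := fun N => ‖(a*b) - d (κ (a*b) N)‖ + ‖a - d (κ a N)‖ * ‖b‖ +
      (‖a‖+1) * ‖b - d (κ b N)‖ + 1/((N:ℝ)+1)) (Eventually.of_forall fun N => norm_nonneg _)
    · filter_upwards [hκok a, hκok b, hκok (a*b), eventually_ge_atTop (Cb 0),
        (hκ0 a).eventually_lt_const one_pos] with N h1 h2 h3 h4 h5
      have hc : enc (2, κ a N, κ b N, κ (a*b) N, 0) < N :=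
        hcode _ _ _ _ _ _ (by norm_num) h1 h2 h3 h4
      have hh := hM' N _ hc
      rw [show Ftup (2, κ a N, κ b N, κ (a*b) N, 0) =
          Lp (κ (a*b) N) - Lp (κ a N) * Lp (κ b N) from rfl] at hh
      rw [map_sub, map_sub, map_mul, map_mul, hEL N _ (hmN h3), hEL N _ (hmN h1),
        hEL N _ (hmN h2)] at hh
      have habs := (abs_le.1 hh).1
      have hkey : d (κ (a*b) N) - d (κ a N) * d (κ b N) =
          (d (κ (a*b) N) - a*b) + ((a - d (κ a N)) * b +
            d (κ a N) * (b - d (κ b N))) := by noncomm_ring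
      have hda : ‖d (κ a N)‖ ≤ ‖a‖ + 1 := by
        have h6 := norm_sub_norm_le (d (κ a N)) a
        have h7 := norm_sub_rev (d (κ a N)) a
        linarith
      have hnorm1 : ‖d (κ (a*b) N) - d (κ a N) * d (κ b N)‖ ≤
          ‖(a*b) - d (κ (a*b) N)‖ + (‖a - d (κ a N)‖ * ‖b‖ + (‖a‖+1) * ‖b - d (κ b N)‖) := by
        rw [hkey]
        have t1 : ‖(a - d (κ a N)) * b‖ ≤ ‖a - d (κ a N)‖ * ‖b‖ :=
          norm_mul_le _ _
        have t2 : ‖d (κ a N) * (b - d (κ b N))‖ ≤ (‖a‖+1) * ‖b - d (κ b N)‖ := by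
          calc ‖d (κ a N) * (b - d (κ b N))‖ ≤ ‖d (κ a N)‖ * ‖b - d (κ b N)‖ := norm_mul_le _ _
            _ ≤ (‖a‖+1) * ‖b - d (κ b N)‖ :=
                mul_le_mul_of_nonneg_right hda (norm_nonneg _)
        calc ‖_ + _‖ ≤ ‖d (κ (a*b) N) - a*b‖ + ‖(a - d (κ a N)) * b +
              d (κ a N) * (b - d (κ b N))‖ := norm_add_le _ _
          _ ≤ _ := by
              rw [norm_sub_rev]
              exact add_le_add_right (le_trans (norm_add_le _ _) (add_le_add t1 t2)) _
      have hgoal : (Φ (a*b) - Φ a * Φ b) N =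
          FreeAlgebra.lift ℂ (ext0 (M N)) (Lp (κ (a*b) N)) -
          FreeAlgebra.lift ℂ (ext0 (M N)) (Lp (κ a N)) *
          FreeAlgebra.lift ℂ (ext0 (M N)) (Lp (κ b N)) := by
        simp only [Pi.sub_apply, Pi.mul_apply, hΦdef]
      rw [hgoal]
      linarith
    · have := (((hκ0 (a*b)).add ((hκ0 a).mul_const ‖b‖)).add
        ((hκ0 b).const_mul (‖a‖+1))).add tendsto_one_div_add_atTop_nhds_zero_nat
      simpa using this
  · -- scalar multiplication
    intro c a
    unfold IsNullSeq
    rw [Metric.tendsto_atTop]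
    intro ε hε
    have hmin : (0:ℝ) < min 1 (ε/(6*(‖a‖+3))) := lt_min one_pos (by positivity)
    obtain ⟨s, hs⟩ : ∃ s, ‖c - qc s‖ < min 1 (ε/(6*(‖a‖+3))) := by
      obtain ⟨s, hs⟩ := Metric.denseRange_iff.1 (denseRange_denseSeq ℂ) c _ hmin
      exact ⟨s, by rwa [Complex.dist_eq] at hs⟩
    set β := ‖c - qc s‖ with hβ
    have hβ1 : β < 1 := lt_of_lt_of_le hs (min_le_left _ _)
    have hβ2 : β < ε/(6*(‖a‖+3)) := lt_of_lt_of_le hs (min_le_right _ _)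
    have hev : ∀ᶠ N in atTop, ‖(Φ (c • a) - c • Φ a) N‖ < ε := by
      filter_upwards [hκok a, hκok (c • a), eventually_ge_atTop (Cb 0),
        eventually_ge_atTop (Cb s),
        (hκ0 a).eventually_lt_const (show (0:ℝ) < ε/(6*(‖c‖ + 1)) by positivity),
        (hκ0 (c • a)).eventually_lt_const (show (0:ℝ) < ε/6 by positivity),
        hubound a,
        tendsto_one_div_add_atTop_nhds_zero_nat.eventually_lt_const
          (show (0:ℝ) < ε/6 by positivity)] with N h1 h2 h3 h4 h5 h6 h7 h8
      have hc' : enc (3, κ a N, 0, κ (c • a) N, s) < N :=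
        hcode _ _ _ _ _ _ (by norm_num) h1 h3 h2 h4
      have hh := hM' N _ hc'
      rw [show Ftup (3, κ a N, 0, κ (c • a) N, s) =
          Lp (κ (c • a) N) - qc s • Lp (κ a N) from rfl] at hh
      rw [map_sub, map_sub, map_smul, map_smul, hEL N _ (hmN h2), hEL N _ (hmN h1)] at hh
      have habs := (abs_le.1 hh).1
      -- algebra-side estimate
      have hkey : d (κ (c • a) N) - qc s • d (κ a N) =
          (d (κ (c • a) N) - c • a) + ((c - qc s) • a + qc s • (a - d (κ a N))) := by
        rw [smul_sub, sub_smul]; abel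
      have hqs : ‖qc s‖ ≤ ‖c‖ + 1 := by
        have h0 : ‖qc s‖ ≤ ‖c‖ + ‖c - qc s‖ := by
          have he : qc s = c - (c - qc s) := by ring
          nth_rewrite 1 [he]
          exact norm_sub_le _ _
        rw [hβ] at hβ1
        linarith
      have hnorm1 : ‖d (κ (c • a) N) - qc s • d (κ a N)‖ ≤
          ‖c • a - d (κ (c • a) N)‖ + (β * ‖a‖ + (‖c‖ + 1) * ‖a - d (κ a N)‖) := by
        rw [hkey]
        have t1 : ‖(c - qc s) • a‖ = β * ‖a‖ := by
          rw [norm_smul]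
        have t2 : ‖qc s • (a - d (κ a N))‖ ≤ (‖c‖ + 1) * ‖a - d (κ a N)‖ := by
          rw [norm_smul]
          exact mul_le_mul_of_nonneg_right hqs (norm_nonneg _)
        calc ‖_ + _‖ ≤ ‖d (κ (c • a) N) - c • a‖ +
              ‖(c - qc s) • a + qc s • (a - d (κ a N))‖ := norm_add_le _ _
          _ ≤ _ := by
              rw [norm_sub_rev]
              exact add_le_add_right (le_trans (norm_add_le _ _) (by rw [t1]; linarith [t2])) _
      -- matrix-side decomposition
      have hgoal : (Φ (c • a) - c • Φ a) N =
          (FreeAlgebra.lift ℂ (ext0 (M N)) (Lp (κ (c • a) N)) -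
            qc s • FreeAlgebra.lift ℂ (ext0 (M N)) (Lp (κ a N))) +
          (qc s - c) • FreeAlgebra.lift ℂ (ext0 (M N)) (Lp (κ a N)) := by
        simp only [Pi.sub_apply, Pi.smul_apply, hΦdef]
        module
      have hΦa : ‖FreeAlgebra.lift ℂ (ext0 (M N)) (Lp (κ a N))‖ ≤ ‖a‖ + 2 := by
        simpa only [hΦdef] using h7
      have hsmul : ‖(qc s - c) • FreeAlgebra.lift ℂ (ext0 (M N)) (Lp (κ a N))‖ ≤
          β * (‖a‖ + 2) := by
        have hns : ‖(qc s - c) • FreeAlgebra.lift ℂ (ext0 (M N)) (Lp (κ a N))‖ =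
            ‖qc s - c‖ * ‖FreeAlgebra.lift ℂ (ext0 (M N)) (Lp (κ a N))‖ := by
          rw [norm_smul (β := EuclideanSpace ℂ (Fin (k N)) →L[ℂ] EuclideanSpace ℂ (Fin (k N)))
            (qc s - c) (FreeAlgebra.lift ℂ (ext0 (M N)) (Lp (κ a N)))]
        have habsy : ‖qc s - c‖ = β := by
          rw [hβ, ← norm_neg, neg_sub]
        rw [hns, habsy]
        exact mul_le_mul_of_nonneg_left hΦa (by rw [hβ]; exact norm_nonneg _)
      rw [hgoal]
      have main : ‖(FreeAlgebra.lift ℂ (ext0 (M N)) (Lp (κ (c • a) N)) -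
            qc s • FreeAlgebra.lift ℂ (ext0 (M N)) (Lp (κ a N))) +
            (qc s - c) • FreeAlgebra.lift ℂ (ext0 (M N)) (Lp (κ a N))‖ ≤
          ‖c • a - d (κ (c • a) N)‖ +
          (β * ‖a‖ + (‖c‖ + 1) * ‖a - d (κ a N)‖) + 1/((N:ℝ)+1) + β * (‖a‖ + 2) := by
        calc ‖(FreeAlgebra.lift ℂ (ext0 (M N)) (Lp (κ (c • a) N)) -
              qc s • FreeAlgebra.lift ℂ (ext0 (M N)) (Lp (κ a N))) +
              (qc s - c) • FreeAlgebra.lift ℂ (ext0 (M N)) (Lp (κ a N))‖ ≤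
            ‖FreeAlgebra.lift ℂ (ext0 (M N)) (Lp (κ (c • a) N)) -
              qc s • FreeAlgebra.lift ℂ (ext0 (M N)) (Lp (κ a N))‖ +
              ‖(qc s - c) • FreeAlgebra.lift ℂ (ext0 (M N)) (Lp (κ a N))‖ := norm_add_le _ _
          _ ≤ _ := by linarith
      -- now the numeric estimate
      have hb1 : β * ‖a‖ ≤ β * (‖a‖ + 3) := by
        have := norm_nonneg (c - qc s)
        rw [← hβ] at this
        nlinarith
      have hb2 : β * (‖a‖ + 2) ≤ β * (‖a‖ + 3) := by
        have := norm_nonneg (c - qc s)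
        rw [← hβ] at this
        nlinarith
      have hb3 : β * (‖a‖ + 3) < ε/6 := by
        have h9 : (0:ℝ) < ‖a‖ + 3 := by positivity
        calc β * (‖a‖ + 3) < (ε/(6*(‖a‖+3))) * (‖a‖+3) := by
              exact mul_lt_mul_of_pos_right hβ2 h9
          _ = ε/6 := by field_simp
      have hb4 : (‖c‖ + 1) * ‖a - d (κ a N)‖ < ε/6 := by
        have h9 : (0:ℝ) < ‖c‖ + 1 := by positivity
        calc (‖c‖ + 1) * ‖a - d (κ a N)‖ <
              (‖c‖ + 1) * (ε/(6*(‖c‖ + 1))) :=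
                mul_lt_mul_of_pos_left h5 h9
          _ = ε/6 := by field_simp
      linarith
    obtain ⟨N₀, hN₀⟩ := eventually_atTop.1 hev
    refine ⟨N₀, fun N hN => ?_⟩
    rw [Real.dist_eq, sub_zero, abs_of_nonneg (norm_nonneg _)]
    exact hN₀ N hN
  · -- star
    intro a
    unfold IsNullSeq
    apply squeeze_zero' (g := fun N => ‖star a - d (κ (star a) N)‖ + ‖a - d (κ a N)‖ +
      1/((N:ℝ)+1)) (Eventually.of_forall fun N => norm_nonneg _)
    · filter_upwards [hκok a, hκok (star a), eventually_ge_atTop (Cb 0)] with N h1 h2 h3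
      have hc : enc (4, κ a N, 0, κ (star a) N, 0) < N :=
        hcode _ _ _ _ _ _ (by norm_num) h1 h3 h2 h3
      have hh := hM' N _ hc
      rw [show Ftup (4, κ a N, 0, κ (star a) N, 0) =
          Lp (κ (star a) N) - Sp (κ a N) from rfl] at hh
      rw [map_sub, map_sub, hEL N _ (hmN h2), hES N _ (hmN h1), hφS] at hh
      have habs := (abs_le.1 hh).1
      have hkey : d (κ (star a) N) - star (d (κ a N)) =
          (d (κ (star a) N) - star a) + star (a - d (κ a N)) := by
        rw [star_sub]; abel
      have hnorm1 : ‖d (κ (star a) N) - star (d (κ a N))‖ ≤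
          ‖star a - d (κ (star a) N)‖ + ‖a - d (κ a N)‖ := by
        rw [hkey]
        calc ‖_ + _‖ ≤ ‖d (κ (star a) N) - star a‖ + ‖star (a - d (κ a N))‖ := norm_add_le _ _
          _ ≤ _ := by rw [norm_sub_rev, norm_star]
      have hgoal : (Φ (star a) - star (Φ a)) N =
          FreeAlgebra.lift ℂ (ext0 (M N)) (Lp (κ (star a) N)) -
          star (FreeAlgebra.lift ℂ (ext0 (M N)) (Lp (κ a N))) := by
        simp only [Pi.sub_apply, Pi.star_apply, hΦdef]
      rw [hgoal]
      linarith
    · have := ((hκ0 (star a)).add (hκ0 a)).add tendsto_one_div_add_atTop_nhds_zero_nat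
      simpa using this
  · -- injectivity
    intro a hnull
    unfold IsNullSeq at hnull
    have hda : Tendsto (fun N => d (κ a N)) atTop (nhds a) := by
      rw [tendsto_iff_norm_sub_tendsto_zero]
      simpa only [norm_sub_rev] using hκ0 a
    have hdn : Tendsto (fun N => ‖d (κ a N)‖) atTop (nhds ‖a‖) := hda.norm
    have hrhs : Tendsto (fun N => ‖Φ a N‖ + 1/((N:ℝ)+1)) atTop (nhds 0) := by
      have := hnull.add tendsto_one_div_add_atTop_nhds_zero_nat
      simpa using this
    have hle : ‖a‖ ≤ 0 := by
      apply le_of_tendsto_of_tendsto hdn hrhs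
      filter_upwards [hub a] with N hN
      exact hN.2
    have : ‖a‖ = 0 := le_antisymm hle (norm_nonneg a)
    exact norm_eq_zero.1 this
end
end

section
/- Let A be a separable C*-algebra. Suppose for every finite subset {x_1, ..., x_n} ⊆ A and ε > 0, there exists an MF algebra A_1, elements y_1,...,y_n ∈ A_1, and faithful *-representations ρ_1 of A and ρ_2 of A_1 on a common Hilbert space H with max_i ‖ρ_1(x_i) − ρ_2(y_i)‖ ≤ ε. Then A is an MF algebra. -/
noncomputable section

open Filter TopologicalSpace

/-- `CloseReps A A₁ H x y ε` : there are faithful `*`-representations `ρ₁` of `A` and `ρ₂`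
of `A₁` on the common Hilbert space `H` with `max_i ‖ρ₁(x_i) − ρ₂(y_i)‖ ≤ ε`. -/
def CloseReps (A A₁ : Type) [NonUnitalCStarAlgebra A] [NonUnitalCStarAlgebra A₁]
    (H : Type) [NormedAddCommGroup H] [InnerProductSpace ℂ H] [CompleteSpace H]
    {n : ℕ} (x : Fin n → A) (y : Fin n → A₁) (ε : ℝ) : Prop :=
  ∃ (ρ₁ : A →⋆ₙₐ[ℂ] (H →L[ℂ] H)) (ρ₂ : A₁ →⋆ₙₐ[ℂ] (H →L[ℂ] H)),
    Function.Injective ρ₁ ∧ Function.Injective ρ₂ ∧ ∀ i, ‖ρ₁ (x i) - ρ₂ (y i)‖ ≤ ε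

open scoped ENNReal


/-- A hands-on `limsup` for real sequences. -/
def LS (u : ℕ → ℝ) : ℝ := ⨅ N : ℕ, ⨆ k : ℕ, u (N + k)

section LSlem

variable {u : ℕ → ℝ} {C : ℝ}

lemma LS_bddAbove (hb : ∀ k, u k ≤ C) (N : ℕ) :
    BddAbove (Set.range fun k => u (N + k)) :=
  ⟨C, by rintro - ⟨k, rfl⟩; exact hb _⟩

lemma LS_sup_nonneg (h0 : ∀ k, 0 ≤ u k) (hb : ∀ k, u k ≤ C) (N : ℕ) :
    0 ≤ ⨆ k : ℕ, u (N + k) :=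
  le_trans (h0 (N + 0)) (le_ciSup (LS_bddAbove hb N) 0)

lemma LS_bddBelow (h0 : ∀ k, 0 ≤ u k) (hb : ∀ k, u k ≤ C) :
    BddBelow (Set.range fun N => ⨆ k : ℕ, u (N + k)) :=
  ⟨0, by rintro - ⟨N, rfl⟩; exact LS_sup_nonneg h0 hb N⟩

lemma LS_nonneg (h0 : ∀ k, 0 ≤ u k) (hb : ∀ k, u k ≤ C) : 0 ≤ LS u :=
  le_ciInf fun N => LS_sup_nonneg h0 hb N

lemma LS_le (h0 : ∀ k, 0 ≤ u k) (hb : ∀ k, u k ≤ C) {c : ℝ} {N : ℕ}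
    (h : ∀ k, N ≤ k → u k ≤ c) : LS u ≤ c := by
  refine le_trans (ciInf_le (LS_bddBelow h0 hb) N) (ciSup_le fun k => ?_)
  exact h _ (Nat.le_add_right N k)

lemma LS_eventually (hb : ∀ k, u k ≤ C) {ε : ℝ} (hε : 0 < ε) :
    ∃ N, ∀ k, N ≤ k → u k ≤ LS u + ε := by
  have h1 : LS u < LS u + ε := by linarith
  obtain ⟨N, hN⟩ := exists_lt_of_ciInf_lt (f := fun N => ⨆ k : ℕ, u (N + k)) h1
  refine ⟨N, fun k hk => ?_⟩
  have : u k = u (N + (k - N)) := by rw [Nat.add_sub_cancel' hk]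
  rw [this]
  exact le_trans (le_ciSup (LS_bddAbove hb N) (k - N)) hN.le

lemma LS_freq (h0 : ∀ k, 0 ≤ u k) (hb : ∀ k, u k ≤ C) {ε : ℝ} (hε : 0 < ε) (N : ℕ) :
    ∃ k, N ≤ k ∧ LS u - ε < u k := by
  have h1 : LS u - ε < ⨆ k : ℕ, u (N + k) := by
    have := ciInf_le (LS_bddBelow h0 hb) N
    have : LS u ≤ ⨆ k : ℕ, u (N + k) := this
    linarith
  obtain ⟨k, hk⟩ := exists_lt_of_lt_ciSup h1
  exact ⟨N + k, Nat.le_add_right N k, hk⟩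

lemma LS_ge (h0 : ∀ k, 0 ≤ u k) (hb : ∀ k, u k ≤ C) {c : ℝ}
    (h : ∀ N, ∃ k, N ≤ k ∧ c ≤ u k) : c ≤ LS u := by
  refine le_ciInf fun N => ?_
  obtain ⟨k, hk, hc⟩ := h N
  have : u (N + (k - N)) = u k := by rw [Nat.add_sub_cancel' hk]
  calc c ≤ u k := hc
    _ = u (N + (k - N)) := this.symm
    _ ≤ _ := le_ciSup (LS_bddAbove hb N) (k - N)

lemma LS_mono {v : ℕ → ℝ} (h0 : ∀ k, 0 ≤ u k) (hb : ∀ k, v k ≤ C)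
    (huv : ∀ k, u k ≤ v k) : LS u ≤ LS v := by
  have h0v : ∀ k, 0 ≤ v k := fun k => le_trans (h0 k) (huv k)
  have hbu : ∀ k, u k ≤ C := fun k => le_trans (huv k) (hb k)
  refine le_of_forall_pos_le_add fun ε hε => ?_
  obtain ⟨N, hN⟩ := LS_eventually hb hε
  exact LS_le h0 hbu fun k hk => le_trans (huv k) (hN k hk)

lemma LS_mul_le {v : ℕ → ℝ} {D : ℝ} (h0u : ∀ k, 0 ≤ u k) (hbu : ∀ k, u k ≤ C)
    (h0v : ∀ k, 0 ≤ v k) (hbv : ∀ k, v k ≤ D) :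
    LS (fun k => u k * v k) ≤ LS u * LS v := by
  have h0uv : ∀ k, 0 ≤ u k * v k := fun k => mul_nonneg (h0u k) (h0v k)
  have hLu : 0 ≤ LS u := LS_nonneg h0u hbu
  have hLv : 0 ≤ LS v := LS_nonneg h0v hbv
  have key : ∀ ε : ℝ, 0 < ε → LS (fun k => u k * v k) ≤ (LS u + ε) * (LS v + ε) := by
    intro ε hε
    obtain ⟨N₁, hN₁⟩ := LS_eventually hbu hε
    obtain ⟨N₂, hN₂⟩ := LS_eventually hbv hε
    refine LS_le h0uv (fun k => mul_le_mul (hbu k) (hbv k) (h0v k)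
      (le_trans (h0u 0) (hbu 0))) (N := max N₁ N₂) fun k hk => ?_
    exact mul_le_mul (hN₁ k (le_trans (le_max_left _ _) hk))
      (hN₂ k (le_trans (le_max_right _ _) hk)) (h0v k) (by linarith)
  refine le_of_forall_pos_le_add fun ε hε => ?_
  have hε' : 0 < min 1 (ε / (LS u + LS v + 1)) := by
    refine lt_min one_pos (div_pos hε (by linarith))
  refine le_trans (key _ hε') ?_
  set δ := min 1 (ε / (LS u + LS v + 1)) with hδ
  have hδ1 : δ ≤ 1 := min_le_left _ _
  have hδ2 : δ ≤ ε / (LS u + LS v + 1) := min_le_right _ _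
  have : (LS u + δ) * (LS v + δ) = LS u * LS v + δ * (LS u + LS v + δ) := by ring
  rw [this]
  have h2 : δ * (LS u + LS v + δ) ≤ δ * (LS u + LS v + 1) :=
    mul_le_mul_of_nonneg_left (by linarith) hε'.le
  have h3 : δ * (LS u + LS v + 1) ≤ ε := by
    rw [← le_div_iff₀ (by linarith : (0:ℝ) < LS u + LS v + 1)]
    exact hδ2
  linarith

lemma LS_sq (h0 : ∀ k, 0 ≤ u k) (hb : ∀ k, u k ≤ C) :
    LS (fun k => u k * u k) = LS u * LS u := by
  refine le_antisymm (LS_mul_le h0 hb h0 hb) ?_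
  have h0sq : ∀ k, 0 ≤ u k * u k := fun k => mul_nonneg (h0 k) (h0 k)
  have hbsq : ∀ k, u k * u k ≤ C * C := fun k =>
    mul_le_mul (hb k) (hb k) (h0 k) (le_trans (h0 0) (hb 0))
  have hL : 0 ≤ LS u := LS_nonneg h0 hb
  refine le_of_forall_pos_le_add fun ε hε => ?_
  rcases le_or_gt (LS u * LS u) ε with h | h
  · linarith [LS_nonneg h0sq hbsq]
  have hLpos : 0 < LS u := by
    rcases hL.lt_or_eq with h' | h'
    · exact h'
    · exfalso; rw [← h'] at h; simp at h; linarith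
  set δ := min (LS u) (ε / (2 * LS u)) with hδdef
  have hδpos : 0 < δ := lt_min hLpos (div_pos hε (by linarith))
  have hδL : δ ≤ LS u := min_le_left _ _
  have hkey : LS u * LS u - ε ≤ (LS u - δ) * (LS u - δ) := by
    have h1 : (LS u - δ) * (LS u - δ) = LS u * LS u - δ * (2 * LS u - δ) := by ring
    have h2 : δ * (2 * LS u - δ) ≤ δ * (2 * LS u) :=
      mul_le_mul_of_nonneg_left (by linarith) hδpos.le
    have h3 : δ * (2 * LS u) ≤ ε := by
      have := min_le_right (LS u) (ε / (2 * LS u))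
      calc δ * (2 * LS u) ≤ ε / (2 * LS u) * (2 * LS u) :=
        mul_le_mul_of_nonneg_right this (by linarith)
      _ = ε := by field_simp
    linarith
  have h5 : (LS u - δ) * (LS u - δ) ≤ LS (fun k => u k * u k) := by
    refine LS_ge h0sq hbsq fun N => ?_
    obtain ⟨k, hk, hu⟩ := LS_freq h0 hb hδpos N
    refine ⟨k, hk, ?_⟩
    have h4 : 0 ≤ LS u - δ := by linarith
    exact mul_le_mul hu.le hu.le h4 (h0 k)
  linarith

lemma LS_of_tendsto_zero (h : Tendsto u atTop (nhds 0)) (h0 : ∀ k, 0 ≤ u k)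
    (hb : ∀ k, u k ≤ C) : LS u = 0 := by
  refine le_antisymm ?_ (LS_nonneg h0 hb)
  refine le_of_forall_pos_le_add fun ε hε => ?_
  obtain ⟨N, hN⟩ := (Metric.tendsto_atTop.1 h) ε hε
  refine le_trans (LS_le h0 hb (N := N) fun k hk => ?_) (by linarith)
  have := hN k hk
  rw [Real.dist_eq, sub_zero] at this
  exact le_of_lt (lt_of_abs_lt this)

lemma tendsto_zero_of_LS (h : LS u = 0) (h0 : ∀ k, 0 ≤ u k) (hb : ∀ k, u k ≤ C) :
    Tendsto u atTop (nhds 0) := by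
  rw [Metric.tendsto_atTop]
  intro ε hε
  obtain ⟨N, hN⟩ := LS_eventually hb (half_pos hε)
  refine ⟨N, fun k hk => ?_⟩
  rw [Real.dist_eq, sub_zero, abs_of_nonneg (h0 k)]
  have := hN k hk
  rw [h] at this
  linarith

end LSlem

section QuotCStar

variable {E : ℕ → Type} [∀ k, NonUnitalCStarAlgebra (E k)]

lemma lp_norm_apply (f : lp E ∞) (k : ℕ) : ‖f k‖ ≤ ‖f‖ :=
  lp.norm_apply_le_norm ENNReal.top_ne_zero f k

/-- The null sequences, as a submodule of `lp E ∞`. -/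
def nullSub : Submodule ℂ (lp E ∞) where
  carrier := {f | Tendsto (fun k => ‖f k‖) atTop (nhds 0)}
  add_mem' := by
    intro f g hf hg
    refine squeeze_zero (fun k => norm_nonneg _) (g := fun k => ‖f k‖ + ‖g k‖)
      (fun k => ?_) (by simpa using hf.add hg)
    have : (↑(f + g) : ∀ k, E k) k = f k + g k := by rw [lp.coeFn_add]; rfl
    rw [this]; exact norm_add_le _ _
  zero_mem' := by
    simpa using (tendsto_const_nhds : Tendsto (fun _ : ℕ => (0:ℝ)) atTop (nhds 0))
  smul_mem' := by
    intro c f hf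
    refine squeeze_zero (fun k => norm_nonneg _) (g := fun k => ‖c‖ * ‖f k‖)
      (fun k => ?_) (by simpa using hf.const_mul ‖c‖)
    have : (↑(c • f) : ∀ k, E k) k = c • f k := by rw [lp.coeFn_smul]; rfl
    rw [this, norm_smul]

lemma mem_nullSub_iff {f : lp E ∞} :
    f ∈ (nullSub : Submodule ℂ (lp E ∞)) ↔ Tendsto (fun k => ‖f k‖) atTop (nhds 0) :=
  Iff.rfl

lemma isClosed_nullSub : IsClosed ((nullSub : Submodule ℂ (lp E ∞)) : Set (lp E ∞)) := by
  refine isClosed_of_closure_subset fun f hf => ?_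
  rw [SetLike.mem_coe, mem_nullSub_iff, Metric.tendsto_atTop]
  intro ε hε
  obtain ⟨g, hg, hdist⟩ := Metric.mem_closure_iff.1 hf (ε/2) (half_pos hε)
  rw [SetLike.mem_coe, mem_nullSub_iff, Metric.tendsto_atTop] at hg
  obtain ⟨N, hN⟩ := hg (ε/2) (half_pos hε)
  refine ⟨N, fun k hk => ?_⟩
  rw [Real.dist_eq, sub_zero, abs_of_nonneg (norm_nonneg _)]
  have h1 : ‖f k - g k‖ ≤ ‖f - g‖ := by
    have : (↑(f - g) : ∀ k, E k) k = f k - g k := by rw [lp.coeFn_sub]; rfl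
    rw [← this]; exact lp_norm_apply _ _
  have h2 : ‖g k‖ < ε/2 := by
    have := hN k hk
    rwa [Real.dist_eq, sub_zero, abs_of_nonneg (norm_nonneg _)] at this
  have h3 : ‖f - g‖ = dist f g := (dist_eq_norm f g).symm
  calc ‖f k‖ ≤ ‖f k - g k‖ + ‖g k‖ := by
        simpa using norm_add_le (f k - g k) (g k)
    _ < ε/2 + ε/2 := by rw [h3] at h1; linarith
    _ = ε := add_halves ε

instance : IsClosed ((nullSub : Submodule ℂ (lp E ∞)) : Set (lp E ∞)) := isClosed_nullSub

/-- The quotient `∏ E k / ⊕ E k`. -/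
abbrev NullQuot (E : ℕ → Type) [∀ k, NonUnitalCStarAlgebra (E k)] : Type :=
  lp E ∞ ⧸ (nullSub : Submodule ℂ (lp E ∞))

local notation "Q" => NullQuot E

open Submodule.Quotient in
/-- The quotient norm equals the `limsup` of the coordinate norms. -/
lemma norm_mk_eq_LS (f : lp E ∞) :
    ‖(Submodule.Quotient.mk f : Q)‖ = LS (fun k => ‖f k‖) := by
  have h0 : ∀ k, (0:ℝ) ≤ ‖f k‖ := fun k => norm_nonneg _
  have hb : ∀ k, ‖f k‖ ≤ ‖f‖ := fun k => lp_norm_apply f k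
  refine le_antisymm ?_ ?_
  · -- quotient norm ≤ LS + ε via truncation
    refine le_of_forall_pos_le_add fun ε hε => ?_
    obtain ⟨N, hN⟩ := LS_eventually hb hε
    have hLS : 0 ≤ LS fun k => ‖f k‖ := LS_nonneg h0 hb
    -- truncation
    have hmem : Memℓp (fun k => if k < N then f k else 0) ∞ := by
      refine memℓp_infty ⟨‖f‖, ?_⟩
      rintro - ⟨k, rfl⟩
      dsimp only
      split
      · exact hb k
      · simpa using norm_nonneg f
    set g : lp E ∞ := ⟨fun k => if k < N then f k else 0, hmem⟩ with hgdef
    have hgmem : g ∈ (nullSub : Submodule ℂ (lp E ∞)) := by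
      rw [mem_nullSub_iff]
      rw [Metric.tendsto_atTop]
      intro δ hδ
      refine ⟨N, fun k hk => ?_⟩
      have : g k = 0 := by
        show (if k < N then f k else 0) = 0
        rw [if_neg (by omega)]
      rw [this]
      simpa using hδ
    have key : (Submodule.Quotient.mk f : Q) = Submodule.Quotient.mk (f - g) := by
      rw [Submodule.Quotient.eq]
      simpa using (nullSub : Submodule ℂ (lp E ∞)).neg_mem hgmem
    rw [key]
    refine le_trans (Submodule.Quotient.norm_mk_le _ _) ?_
    refine lp.norm_le_of_forall_le (by linarith) fun k => ?_
    have hco : (↑(f - g) : ∀ k, E k) k = f k - g k := by rw [lp.coeFn_sub]; rfl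
    rw [hco]
    by_cases hkN : k < N
    · have : g k = f k := by show (if k < N then f k else 0) = f k; rw [if_pos hkN]
      rw [this]; simpa using by linarith
    · have : g k = 0 := by show (if k < N then f k else 0) = 0; rw [if_neg hkN]
      rw [this, sub_zero]
      exact hN k (by omega)
  · -- LS ≤ quotient norm
    refine le_of_forall_pos_le_add fun ε hε => ?_
    obtain ⟨m, hm, hmn⟩ :=
      Submodule.Quotient.norm_mk_lt (Submodule.Quotient.mk f : Q) (half_pos hε)
    have hfm : f - m ∈ (nullSub : Submodule ℂ (lp E ∞)) := by
      rw [← Submodule.Quotient.eq]; exact hm.symm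
    rw [mem_nullSub_iff, Metric.tendsto_atTop] at hfm
    obtain ⟨N, hN⟩ := hfm (ε/2) (half_pos hε)
    refine LS_le h0 hb (N := N) fun k hk => ?_
    have h1 : ‖f k - m k‖ < ε/2 := by
      have := hN k hk
      rw [Real.dist_eq, sub_zero, abs_of_nonneg (norm_nonneg _)] at this
      have hco : (↑(f - m) : ∀ k, E k) k = f k - m k := by rw [lp.coeFn_sub]; rfl
      rwa [hco] at this
    have h2 : ‖m k‖ ≤ ‖m‖ := lp_norm_apply m k
    calc ‖f k‖ ≤ ‖f k - m k‖ + ‖m k‖ := by simpa using norm_add_le (f k - m k) (m k)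
      _ ≤ ε/2 + ‖m‖ := by linarith
      _ ≤ ‖(Submodule.Quotient.mk f : Q)‖ + ε/2 + ε/2 := by linarith
      _ = ‖(Submodule.Quotient.mk f : Q)‖ + ε := by ring

lemma nullSub_mul_mem {f s : lp E ∞} (hs : s ∈ (nullSub : Submodule ℂ (lp E ∞))) :
    f * s ∈ (nullSub : Submodule ℂ (lp E ∞)) := by
  rw [mem_nullSub_iff] at *
  refine squeeze_zero (fun k => norm_nonneg _) (g := fun k => ‖f‖ * ‖s k‖) (fun k => ?_)
    (by simpa using hs.const_mul ‖f‖)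
  have hco : (↑(f * s) : ∀ k, E k) k = f k * s k := by rw [lp.infty_coeFn_mul]; rfl
  rw [hco]
  exact le_trans (norm_mul_le _ _) (mul_le_mul_of_nonneg_right (lp_norm_apply f k)
    (norm_nonneg _))

lemma nullSub_mul_mem' {f s : lp E ∞} (hs : s ∈ (nullSub : Submodule ℂ (lp E ∞))) :
    s * f ∈ (nullSub : Submodule ℂ (lp E ∞)) := by
  rw [mem_nullSub_iff] at *
  refine squeeze_zero (fun k => norm_nonneg _) (g := fun k => ‖s k‖ * ‖f‖) (fun k => ?_)
    (by simpa using hs.mul_const ‖f‖)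
  have hco : (↑(s * f) : ∀ k, E k) k = s k * f k := by rw [lp.infty_coeFn_mul]; rfl
  rw [hco]
  exact le_trans (norm_mul_le _ _) (mul_le_mul_of_nonneg_left (lp_norm_apply f k)
    (norm_nonneg _))

instance : Mul (NullQuot E) :=
  ⟨fun x y => Quotient.liftOn₂' x y
    (fun f g => Submodule.Quotient.mk (f * g)) (by
      intro f g f' g' hf hg
      have hf' : f - f' ∈ (nullSub : Submodule ℂ (lp E ∞)) :=
        (Submodule.quotientRel_def _).1 hf
      have hg' : g - g' ∈ (nullSub : Submodule ℂ (lp E ∞)) :=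
        (Submodule.quotientRel_def _).1 hg
      rw [Submodule.Quotient.eq]
      have : f * g - f' * g' = f * (g - g') + (f - f') * g' := by
        rw [mul_sub, sub_mul]; abel
      rw [this]
      exact Submodule.add_mem _ (nullSub_mul_mem hg') (nullSub_mul_mem' hf'))⟩

lemma mk_mul (f g : lp E ∞) :
    (Submodule.Quotient.mk f : Q) * Submodule.Quotient.mk g
      = Submodule.Quotient.mk (f * g) := rfl

instance : Star (NullQuot E) :=
  ⟨fun x => Quotient.liftOn' x (fun f => Submodule.Quotient.mk (star f)) (by
    intro f f' hf
    have hf' : f - f' ∈ (nullSub : Submodule ℂ (lp E ∞)) :=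
      (Submodule.quotientRel_def _).1 hf
    rw [Submodule.Quotient.eq]
    rw [mem_nullSub_iff] at *
    refine hf'.congr fun k => ?_
    have h1 : (↑(star f - star f') : ∀ k, E k) k = star (f k) - star (f' k) := by
      rw [lp.coeFn_sub]
      show star f k - star f' k = _
      rw [lp.star_apply, lp.star_apply]
    have h2 : (↑(f - f') : ∀ k, E k) k = f k - f' k := by rw [lp.coeFn_sub]; rfl
    rw [h1, h2, ← star_sub, norm_star])⟩

lemma mk_star (f : lp E ∞) :
    star (Submodule.Quotient.mk f : Q) = Submodule.Quotient.mk (star f) := rfl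


lemma q_induction₁ {P : NullQuot E → Prop}
    (h : ∀ f : lp E ∞, P (Submodule.Quotient.mk f)) : ∀ x, P x := by
  intro x
  obtain ⟨f, rfl⟩ := Submodule.Quotient.mk_surjective _ x
  exact h f

instance : NonUnitalRing (NullQuot E) :=
  { (inferInstance : AddCommGroup (NullQuot E)),
    (inferInstance : Mul (NullQuot E)) with
    left_distrib := by
      refine q_induction₁ fun f => q_induction₁ fun g => q_induction₁ fun h => ?_
      rw [← Submodule.Quotient.mk_add, mk_mul, mk_mul, mk_mul, ← Submodule.Quotient.mk_add,
        mul_add]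
    right_distrib := by
      refine q_induction₁ fun f => q_induction₁ fun g => q_induction₁ fun h => ?_
      rw [← Submodule.Quotient.mk_add, mk_mul, mk_mul, mk_mul, ← Submodule.Quotient.mk_add,
        add_mul]
    zero_mul := by
      refine q_induction₁ fun f => ?_
      rw [← Submodule.Quotient.mk_zero, mk_mul, zero_mul]
    mul_zero := by
      refine q_induction₁ fun f => ?_
      rw [← Submodule.Quotient.mk_zero, mk_mul, mul_zero]
    mul_assoc := by
      refine q_induction₁ fun f => q_induction₁ fun g => q_induction₁ fun h => ?_
      rw [mk_mul, mk_mul, mk_mul, mk_mul, mul_assoc] }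

lemma coord_bound (f : lp E ∞) : ∀ k, ‖f k‖ ≤ ‖f‖ := fun k => lp_norm_apply f k

lemma coord_nonneg (f : lp E ∞) : ∀ k, (0:ℝ) ≤ ‖f k‖ := fun k => norm_nonneg _

instance : NonUnitalNormedRing (NullQuot E) :=
  { (inferInstance : NormedAddCommGroup (NullQuot E)),
    (inferInstance : NonUnitalRing (NullQuot E)) with
    dist_eq := fun x y => by rw [dist_eq_norm, neg_add_eq_sub, norm_sub_rev]
    norm_mul_le := by
      refine q_induction₁ fun f => q_induction₁ fun g => ?_
      rw [mk_mul, norm_mk_eq_LS, norm_mk_eq_LS, norm_mk_eq_LS]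
      refine le_trans (LS_mono (coord_nonneg _)
        (C := ‖f‖ * ‖g‖) (v := fun k => ‖f k‖ * ‖g k‖)
        (fun k => mul_le_mul (coord_bound f k) (coord_bound g k) (norm_nonneg _)
          (norm_nonneg _))
        (fun k => ?_)) ?_
      · have hco : (↑(f * g) : ∀ k, E k) k = f k * g k := by rw [lp.infty_coeFn_mul]; rfl
        rw [hco]; exact norm_mul_le _ _
      · exact LS_mul_le (coord_nonneg f) (coord_bound f) (coord_nonneg g) (coord_bound g) }

instance : StarRing (NullQuot E) :=
  { (inferInstance : Star (NullQuot E)) with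
    star_involutive := by
      refine q_induction₁ fun f => ?_
      rw [mk_star, mk_star, star_star]
    star_mul := by
      refine q_induction₁ fun f => q_induction₁ fun g => ?_
      rw [mk_mul, mk_star, mk_star, mk_star, mk_mul, star_mul]
    star_add := by
      refine q_induction₁ fun f => q_induction₁ fun g => ?_
      rw [← Submodule.Quotient.mk_add, mk_star, mk_star, mk_star, ← Submodule.Quotient.mk_add,
        star_add] }

instance : CStarRing (NullQuot E) where
  norm_mul_self_le := by
    refine q_induction₁ fun f => ?_
    have key : ‖star (Submodule.Quotient.mk f : NullQuot E) * Submodule.Quotient.mk f‖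
        = ‖(Submodule.Quotient.mk f : NullQuot E)‖ * ‖(Submodule.Quotient.mk f : NullQuot E)‖ := by
      rw [mk_star, mk_mul, norm_mk_eq_LS, norm_mk_eq_LS]
      have hco : ∀ k, ‖(↑(star f * f) : ∀ k, E k) k‖ = ‖f k‖ * ‖f k‖ := by
        intro k
        have h1 : (↑(star f * f) : ∀ k, E k) k = star f k * f k := by
          rw [lp.infty_coeFn_mul]; rfl
        rw [h1, lp.star_apply, CStarRing.norm_star_mul_self]
      calc LS (fun k => ‖(↑(star f * f) : ∀ k, E k) k‖)
          = LS (fun k => ‖f k‖ * ‖f k‖) := by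
            congr 1; funext k; exact hco k
        _ = _ := LS_sq (coord_nonneg f) (coord_bound f)
    rw [key]

instance : SMulCommClass ℂ (NullQuot E) (NullQuot E) where
  smul_comm c := by
    refine q_induction₁ fun f => q_induction₁ fun g => ?_
    simp only [smul_eq_mul]
    rw [← Submodule.Quotient.mk_smul, mk_mul, mk_mul, ← Submodule.Quotient.mk_smul,
      mul_smul_comm]

instance : IsScalarTower ℂ (NullQuot E) (NullQuot E) where
  smul_assoc c := by
    refine q_induction₁ fun f => q_induction₁ fun g => ?_
    simp only [smul_eq_mul]
    rw [← Submodule.Quotient.mk_smul, mk_mul, mk_mul, ← Submodule.Quotient.mk_smul,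
      smul_mul_assoc]

instance : StarModule ℂ (NullQuot E) where
  star_smul c := by
    refine q_induction₁ fun f => ?_
    rw [← Submodule.Quotient.mk_smul, mk_star, mk_star, ← Submodule.Quotient.mk_smul,
      star_smul]

instance : NonUnitalCStarAlgebra (NullQuot E) where


section KeyLemma

variable {A₁ : Type} [NonUnitalCStarAlgebra A₁]

theorem LS_norm_eq (Φ : A₁ → ∀ k, E k)
    (hbdd : ∀ a, ∃ C : ℝ, ∀ k, ‖Φ a k‖ ≤ C)
    (hadd : ∀ a b, Tendsto (fun k => ‖Φ (a + b) k - (Φ a k + Φ b k)‖) atTop (nhds 0))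
    (hmul : ∀ a b, Tendsto (fun k => ‖Φ (a * b) k - Φ a k * Φ b k‖) atTop (nhds 0))
    (hsmul : ∀ (c : ℂ) (a : A₁), Tendsto (fun k => ‖Φ (c • a) k - c • Φ a k‖) atTop (nhds 0))
    (hstar : ∀ a, Tendsto (fun k => ‖Φ (star a) k - star (Φ a k)‖) atTop (nhds 0))
    (hinj : ∀ a, Tendsto (fun k => ‖Φ a k‖) atTop (nhds 0) → a = 0)
    (b : A₁) : LS (fun k => ‖Φ b k‖) = ‖b‖ := by
  classical
  -- the lift into `lp E ∞`
  have hmem : ∀ a, Memℓp (Φ a) ∞ := by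
    intro a
    obtain ⟨C, hC⟩ := hbdd a
    exact memℓp_infty ⟨C, by rintro - ⟨k, rfl⟩; exact hC k⟩
  set lift : A₁ → lp E ∞ := fun a => ⟨Φ a, hmem a⟩ with hliftdef
  have hcoord : ∀ a k, (lift a : ∀ k, E k) k = Φ a k := fun a k => rfl
  have hnull : ∀ (g : lp E ∞), (∀ k, ‖(g : ∀ k, E k) k‖ = ‖Φ ((0:A₁)) k‖) → True := fun _ _ => trivial
  -- `mk ∘ lift` is a star algebra homomorphism
  have hzero : Tendsto (fun k => ‖Φ (0:A₁) k‖) atTop (nhds 0) := by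
    have h := hadd 0 0
    simp only [add_zero] at h
    have heq : ∀ k, ‖Φ (0:A₁) k - (Φ (0:A₁) k + Φ (0:A₁) k)‖ = ‖Φ (0:A₁) k‖ := by
      intro k
      have : Φ (0:A₁) k - (Φ (0:A₁) k + Φ (0:A₁) k) = -Φ (0:A₁) k := by abel
      rw [this, norm_neg]
    simpa only [heq] using h
  let ψ : A₁ →⋆ₙₐ[ℂ] NullQuot E :=
    { toFun := fun a => Submodule.Quotient.mk (lift a)
      map_zero' := by
        rw [Submodule.Quotient.mk_eq_zero]
        rw [mem_nullSub_iff]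
        exact hzero
      map_add' := by
        intro a b
        rw [← Submodule.Quotient.mk_add, Submodule.Quotient.eq]
        rw [mem_nullSub_iff]
        refine (hadd a b).congr fun k => ?_
        rfl
      map_mul' := by
        intro a b
        rw [mk_mul, Submodule.Quotient.eq, mem_nullSub_iff]
        refine (hmul a b).congr fun k => ?_
        rfl
      map_smul' := by
        intro c a
        rw [← Submodule.Quotient.mk_smul, Submodule.Quotient.eq, mem_nullSub_iff]
        refine (hsmul c a).congr fun k => ?_
        rfl
      map_star' := by
        intro a
        rw [mk_star, Submodule.Quotient.eq, mem_nullSub_iff]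
        refine (hstar a).congr fun k => ?_
        rfl }
  have hψinj : Function.Injective ψ := by
    rw [injective_iff_map_eq_zero]
    intro a ha
    have : lift a ∈ (nullSub : Submodule ℂ (lp E ∞)) := by
      rw [← Submodule.Quotient.mk_eq_zero]
      exact ha
    rw [mem_nullSub_iff] at this
    exact hinj a this
  have := NonUnitalStarAlgHom.norm_map ψ hψinj b
  rw [← this]
  show LS (fun k => ‖Φ b k‖) = ‖Submodule.Quotient.mk (lift b)‖
  rw [norm_mk_eq_LS]

end KeyLemma

end QuotCStar

lemma null_add' {n : ℕ → ℕ} {f g : ∀ k, MatCStar (n k)}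
    (hf : Tendsto (fun k => ‖f k‖) atTop (nhds 0))
    (hg : Tendsto (fun k => ‖g k‖) atTop (nhds 0)) :
    Tendsto (fun k => ‖f k + g k‖) atTop (nhds 0) :=
  squeeze_zero (fun k => norm_nonneg _) (fun k => norm_add_le _ _) (by simpa only [add_zero] using hf.add hg)

set_option maxHeartbeats 1000000 in
lemma stage_lemma (A : Type) [NonUnitalCStarAlgebra A] (d : ℕ → A) (e : ℕ → ℂ)
    (h : ∀ (n : ℕ) (x : Fin n → A) (ε : ℝ), 0 < ε →
      ∃ (A₁ : Type) (i₁ : NonUnitalCStarAlgebra A₁),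
        @IsMF A₁ i₁.toNonUnitalNormedRing i₁.toStarRing i₁.toNormedSpace ∧
        ∃ y : Fin n → A₁,
          ∃ (H : Type) (iH : NormedAddCommGroup H)
            (iH₂ : @InnerProductSpace ℂ H Complex.instRCLike
              iH.toSeminormedAddCommGroup)
            (iH₃ : CompleteSpace H),
            @CloseReps A A₁ _ i₁ H iH iH₂ iH₃ n x y ε)
    (m : ℕ) (i : Fin (m+1)) :
    ∃ s : ℕ, 0 < s ∧ ∃ V : Fin (m+1) → MatCStar s,
      (∀ p, ‖V p‖ ≤ ‖d ↑p‖ + 2/((m:ℝ)+1)) ∧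
      (∀ p q r, ‖V p - V q - V r‖ ≤ ‖d ↑p - d ↑q - d ↑r‖ + 6/((m:ℝ)+1)) ∧
      (∀ p q r, ‖V p - V q * V r‖ ≤ ‖d ↑p - d ↑q * d ↑r‖
        + (5 + ‖d ↑q‖ + ‖d ↑r‖)/((m:ℝ)+1)) ∧
      (∀ t p q : Fin (m+1), ‖V p - e ↑t • V q‖ ≤ ‖d ↑p - e ↑t • d ↑q‖
        + (3 + ‖e ↑t‖)/((m:ℝ)+1)) ∧
      (∀ p q, ‖V p - star (V q)‖ ≤ ‖d ↑p - star (d ↑q)‖ + 4/((m:ℝ)+1)) ∧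
      (‖d ↑i‖ - 2/((m:ℝ)+1) ≤ ‖V i‖) := by
  classical
  set εm : ℝ := 1/((m:ℝ)+1) with hεmdef
  have hεm : 0 < εm := by positivity
  have hεm1 : εm ≤ 1 := by
    rw [hεmdef]
    rw [div_le_one (by positivity)]
    simp
  obtain ⟨A₁, i₁, hMF, y, Hs, iH, iH2, iH3, hcr⟩ := h (m+1) (fun j => d ↑j) εm hεm
  obtain ⟨ρ₁, ρ₂, hρ1, hρ2, hcl⟩ := hcr
  obtain ⟨nseq, hposn, Φ, hbdd, hadd, hmul, hsmul, hstar, hinjΦ⟩ := hMF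
  -- the limsup identity from the key lemma
  have LSall : ∀ w : A₁, LS (fun k => ‖Φ w k‖) = ‖w‖ := fun w =>
    LS_norm_eq (E := fun k => MatCStar (nseq k)) Φ hbdd
      (fun a b => hadd a b) (fun a b => hmul a b) (fun c a => hsmul c a)
      (fun a => hstar a) (fun a => hinjΦ a) w
  have hΦb : ∀ w : A₁, ∀ k, ‖Φ w k‖ ≤ (hbdd w).choose := fun w => (hbdd w).choose_spec
  -- eventual upper bound for each element
  have hup : ∀ w : A₁, ∀ᶠ k in atTop, ‖Φ w k‖ ≤ ‖w‖ + εm := by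
    intro w
    obtain ⟨N, hN⟩ := LS_eventually (hΦb w) hεm
    rw [eventually_atTop]
    exact ⟨N, fun k hk => by have := hN k hk; rwa [LSall w] at this⟩
  -- isometries
  have iso1 : ∀ z : A, ‖ρ₁ z‖ = ‖z‖ := fun z => NonUnitalStarAlgHom.norm_map ρ₁ hρ1 z
  have iso2 : ∀ w : A₁, ‖ρ₂ w‖ = ‖w‖ := fun w => NonUnitalStarAlgHom.norm_map ρ₂ hρ2 w
  have tri : ∀ X Y : Hs →L[ℂ] Hs, ‖X‖ ≤ ‖Y‖ + ‖Y - X‖ := fun X Y => by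
    calc ‖X‖ = ‖Y - (Y - X)‖ := by rw [sub_sub_cancel]
      _ ≤ ‖Y‖ + ‖Y - X‖ := norm_sub_le _ _
  -- norm transfers from A to A₁
  have T1a : ∀ p : Fin (m+1), ‖y p‖ ≤ ‖d ↑p‖ + εm := by
    intro p
    have h1 := tri (ρ₂ (y p)) (ρ₁ (d ↑p))
    rw [iso1, iso2] at h1
    linarith [hcl p]
  have T1b : ∀ p : Fin (m+1), ‖d ↑p‖ ≤ ‖y p‖ + εm := by
    intro p
    have h1 := tri (ρ₁ (d ↑p)) (ρ₂ (y p))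
    rw [iso1, iso2, norm_sub_rev] at h1
    linarith [hcl p]
  have T2 : ∀ p q r : Fin (m+1),
      ‖y p - y q - y r‖ ≤ ‖d ↑p - d ↑q - d ↑r‖ + 3*εm := by
    intro p q r
    have h1 := tri (ρ₂ (y p - y q - y r)) (ρ₁ (d ↑p - d ↑q - d ↑r))
    rw [iso1, iso2] at h1
    have heq : ρ₁ (d ↑p - d ↑q - d ↑r) - ρ₂ (y p - y q - y r)
        = (ρ₁ (d ↑p) - ρ₂ (y p)) - (ρ₁ (d ↑q) - ρ₂ (y q)) - (ρ₁ (d ↑r) - ρ₂ (y r)) := by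
      rw [map_sub, map_sub, map_sub, map_sub]; abel
    have h2 : ‖ρ₁ (d ↑p - d ↑q - d ↑r) - ρ₂ (y p - y q - y r)‖ ≤ 3*εm := by
      rw [heq]
      calc ‖_ - _ - _‖ ≤ ‖(ρ₁ (d ↑p) - ρ₂ (y p)) - (ρ₁ (d ↑q) - ρ₂ (y q))‖
            + ‖ρ₁ (d ↑r) - ρ₂ (y r)‖ := norm_sub_le _ _
        _ ≤ ‖ρ₁ (d ↑p) - ρ₂ (y p)‖ + ‖ρ₁ (d ↑q) - ρ₂ (y q)‖
            + ‖ρ₁ (d ↑r) - ρ₂ (y r)‖ := by linarith [norm_sub_le (ρ₁ (d ↑p) - ρ₂ (y p)) (ρ₁ (d ↑q) - ρ₂ (y q))]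
        _ ≤ 3*εm := by linarith [hcl p, hcl q, hcl r]
    linarith
  have T3 : ∀ p q r : Fin (m+1),
      ‖y p - y q * y r‖ ≤ ‖d ↑p - d ↑q * d ↑r‖ + (2 + ‖d ↑q‖ + ‖d ↑r‖)*εm := by
    intro p q r
    have h1 := tri (ρ₂ (y p - y q * y r)) (ρ₁ (d ↑p - d ↑q * d ↑r))
    rw [iso1, iso2] at h1
    have heq : ρ₁ (d ↑p - d ↑q * d ↑r) - ρ₂ (y p - y q * y r)
        = (ρ₁ (d ↑p) - ρ₂ (y p))
          - (ρ₁ (d ↑q) * (ρ₁ (d ↑r) - ρ₂ (y r)) + (ρ₁ (d ↑q) - ρ₂ (y q)) * ρ₂ (y r)) := by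
      rw [map_sub, map_sub, map_mul, map_mul, mul_sub, sub_mul]; abel
    have hq : ‖ρ₁ (d ↑q)‖ = ‖d ↑q‖ := iso1 _
    have hr : ‖ρ₂ (y r)‖ ≤ ‖d ↑r‖ + εm := by rw [iso2]; exact T1a r
    have h2 : ‖ρ₁ (d ↑p - d ↑q * d ↑r) - ρ₂ (y p - y q * y r)‖
        ≤ (2 + ‖d ↑q‖ + ‖d ↑r‖)*εm := by
      rw [heq]
      have e1 : ‖ρ₁ (d ↑q) * (ρ₁ (d ↑r) - ρ₂ (y r))‖ ≤ ‖d ↑q‖ * εm := by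
        refine le_trans (norm_mul_le _ _) ?_
        rw [hq]
        exact mul_le_mul_of_nonneg_left (hcl r) (norm_nonneg _)
      have e2 : ‖(ρ₁ (d ↑q) - ρ₂ (y q)) * ρ₂ (y r)‖ ≤ εm * (‖d ↑r‖ + εm) := by
        refine le_trans (norm_mul_le _ _) ?_
        exact mul_le_mul (hcl q) hr (norm_nonneg _) hεm.le
      calc ‖_ - _‖ ≤ ‖ρ₁ (d ↑p) - ρ₂ (y p)‖
            + ‖ρ₁ (d ↑q) * (ρ₁ (d ↑r) - ρ₂ (y r)) + (ρ₁ (d ↑q) - ρ₂ (y q)) * ρ₂ (y r)‖ :=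
          norm_sub_le _ _
        _ ≤ ‖ρ₁ (d ↑p) - ρ₂ (y p)‖ + (‖ρ₁ (d ↑q) * (ρ₁ (d ↑r) - ρ₂ (y r))‖
            + ‖(ρ₁ (d ↑q) - ρ₂ (y q)) * ρ₂ (y r)‖) := by
          linarith [norm_add_le (ρ₁ (d ↑q) * (ρ₁ (d ↑r) - ρ₂ (y r)))
            ((ρ₁ (d ↑q) - ρ₂ (y q)) * ρ₂ (y r))]
        _ ≤ εm + (‖d ↑q‖ * εm + εm * (‖d ↑r‖ + εm)) := by linarith [hcl p]
        _ ≤ (2 + ‖d ↑q‖ + ‖d ↑r‖)*εm := by nlinarith [hεm.le, hεm1]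
    linarith
  have T4 : ∀ (c : ℂ) (p q : Fin (m+1)),
      ‖y p - c • y q‖ ≤ ‖d ↑p - c • d ↑q‖ + (1 + ‖c‖)*εm := by
    intro c p q
    have h1 := tri (ρ₂ (y p - c • y q)) (ρ₁ (d ↑p - c • d ↑q))
    rw [iso1, iso2] at h1
    have heq : ρ₁ (d ↑p - c • d ↑q) - ρ₂ (y p - c • y q)
        = (ρ₁ (d ↑p) - ρ₂ (y p)) - c • (ρ₁ (d ↑q) - ρ₂ (y q)) := by
      rw [map_sub, map_sub, map_smul, map_smul, smul_sub]; abel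
    have h2 : ‖ρ₁ (d ↑p - c • d ↑q) - ρ₂ (y p - c • y q)‖ ≤ (1 + ‖c‖)*εm := by
      rw [heq]
      have e1 : ‖c • (ρ₁ (d ↑q) - ρ₂ (y q))‖ ≤ ‖c‖ * εm := by
        rw [norm_smul]
        exact mul_le_mul_of_nonneg_left (hcl q) (norm_nonneg _)
      calc ‖_ - _‖ ≤ ‖ρ₁ (d ↑p) - ρ₂ (y p)‖ + ‖c • (ρ₁ (d ↑q) - ρ₂ (y q))‖ := norm_sub_le _ _
        _ ≤ εm + ‖c‖ * εm := by linarith [hcl p]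
        _ = (1 + ‖c‖)*εm := by ring
    linarith
  have T5 : ∀ p q : Fin (m+1),
      ‖y p - star (y q)‖ ≤ ‖d ↑p - star (d ↑q)‖ + 2*εm := by
    intro p q
    have h1 := tri (ρ₂ (y p - star (y q))) (ρ₁ (d ↑p - star (d ↑q)))
    rw [iso1, iso2] at h1
    have heq : ρ₁ (d ↑p - star (d ↑q)) - ρ₂ (y p - star (y q))
        = (ρ₁ (d ↑p) - ρ₂ (y p)) - star (ρ₁ (d ↑q) - ρ₂ (y q)) := by
      rw [map_sub, map_sub, map_star, map_star, star_sub]; abel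
    have h2 : ‖ρ₁ (d ↑p - star (d ↑q)) - ρ₂ (y p - star (y q))‖ ≤ 2*εm := by
      rw [heq]
      calc ‖_ - _‖ ≤ ‖ρ₁ (d ↑p) - ρ₂ (y p)‖ + ‖star (ρ₁ (d ↑q) - ρ₂ (y q))‖ := norm_sub_le _ _
        _ ≤ εm + εm := by rw [norm_star]; linarith [hcl p, hcl q]
        _ = 2*εm := by ring
    linarith
  -- approximate-homomorphism defects
  have defect_sub : ∀ u v : A₁,
      Tendsto (fun k => ‖Φ (u - v) k - (Φ u k - Φ v k)‖) atTop (nhds 0) := by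
    intro u v
    have h0 := hadd (u - v) v
    have he : u - v + v = u := by abel
    rw [he] at h0
    have h0' : Tendsto (fun k => ‖Φ u k - (Φ (u - v) k + Φ v k)‖) atTop (nhds 0) := h0
    refine h0'.congr fun k => ?_
    rw [← norm_neg]
    congr 1
    abel
  have ev_of : ∀ (w : A₁) (G : ∀ k, MatCStar (nseq k)),
      Tendsto (fun k => ‖Φ w k - G k‖) atTop (nhds 0) →
      ∀ᶠ k in atTop, ‖G k‖ ≤ ‖w‖ + 2*εm := by
    intro w G hG
    filter_upwards [hup w, hG.eventually (gt_mem_nhds hεm)] with k h1 h2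
    have h3 : ‖G k‖ ≤ ‖Φ w k‖ + ‖Φ w k - G k‖ := by
      calc ‖G k‖ = ‖Φ w k - (Φ w k - G k)‖ := by rw [sub_sub_cancel]
        _ ≤ _ := norm_sub_le _ _
    linarith
  -- eventual conditions
  have heva : ∀ᶠ k in atTop, ∀ p : Fin (m+1), ‖Φ (y p) k‖ ≤ ‖y p‖ + εm :=
    eventually_all.2 fun p => hup (y p)
  have hevb : ∀ᶠ k in atTop, ∀ p q r : Fin (m+1),
      ‖Φ (y p) k - Φ (y q) k - Φ (y r) k‖ ≤ ‖y p - y q - y r‖ + 2*εm := by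
    rw [eventually_all]; intro p
    rw [eventually_all]; intro q
    rw [eventually_all]; intro r
    refine ev_of _ _ ?_
    have h1 := defect_sub (y p - y q) (y r)
    have h2 := defect_sub (y p) (y q)
    have h2' : Tendsto (fun k => ‖Φ (y p - y q) k - Φ (y p) k + Φ (y q) k‖) atTop (nhds 0) :=
      h2.congr fun k => by congr 1; abel
    refine (null_add' (n := nseq)
      (f := fun k => Φ (y p - y q - y r) k - (Φ (y p - y q) k - Φ (y r) k))
      (g := fun k => Φ (y p - y q) k - Φ (y p) k + Φ (y q) k) h1 h2').congr fun k => ?_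
    congr 1
    abel
  have hevc : ∀ᶠ k in atTop, ∀ p q r : Fin (m+1),
      ‖Φ (y p) k - Φ (y q) k * Φ (y r) k‖ ≤ ‖y p - y q * y r‖ + 2*εm := by
    rw [eventually_all]; intro p
    rw [eventually_all]; intro q
    rw [eventually_all]; intro r
    refine ev_of _ _ ?_
    have h1 := defect_sub (y p) (y q * y r)
    have h2 := hmul (y q) (y r)
    have h2' : Tendsto (fun k => ‖Φ (y q * y r) k - Φ (y q) k * Φ (y r) k‖) atTop (nhds 0) := h2
    have h2'' : Tendsto (fun k => ‖Φ (y q) k * Φ (y r) k - Φ (y q * y r) k‖) atTop (nhds 0) :=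
      h2'.congr fun k => norm_sub_rev _ _
    refine (null_add' (n := nseq)
      (f := fun k => Φ (y p - y q * y r) k - (Φ (y p) k - Φ (y q * y r) k))
      (g := fun k => Φ (y q) k * Φ (y r) k - Φ (y q * y r) k) h1 h2'').congr fun k => ?_
    congr 1
    abel
  have hevd : ∀ᶠ k in atTop, ∀ t p q : Fin (m+1),
      ‖Φ (y p) k - e ↑t • Φ (y q) k‖ ≤ ‖y p - e ↑t • y q‖ + 2*εm := by
    rw [eventually_all]; intro t
    rw [eventually_all]; intro p
    rw [eventually_all]; intro q
    refine ev_of _ _ ?_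
    have h1 := defect_sub (y p) ((e ↑t) • y q)
    have h2 := hsmul (e ↑t) (y q)
    have h2' : Tendsto (fun k => ‖Φ (e ↑t • y q) k - e ↑t • Φ (y q) k‖) atTop (nhds 0) := h2
    have h2'' : Tendsto (fun k => ‖e ↑t • Φ (y q) k - Φ (e ↑t • y q) k‖) atTop (nhds 0) :=
      h2'.congr fun k => norm_sub_rev _ _
    refine (null_add' (n := nseq)
      (f := fun k => Φ (y p - e ↑t • y q) k - (Φ (y p) k - Φ (e ↑t • y q) k))
      (g := fun k => e ↑t • Φ (y q) k - Φ (e ↑t • y q) k) h1 h2'').congr fun k => ?_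
    congr 1
    abel
  have heve : ∀ᶠ k in atTop, ∀ p q : Fin (m+1),
      ‖Φ (y p) k - star (Φ (y q) k)‖ ≤ ‖y p - star (y q)‖ + 2*εm := by
    rw [eventually_all]; intro p
    rw [eventually_all]; intro q
    refine ev_of _ _ ?_
    have h1 := defect_sub (y p) (star (y q))
    have h2 := hstar (y q)
    have h2' : Tendsto (fun k => ‖Φ (star (y q)) k - star (Φ (y q) k)‖) atTop (nhds 0) := h2
    have h2'' : Tendsto (fun k => ‖star (Φ (y q) k) - Φ (star (y q)) k‖) atTop (nhds 0) :=
      h2'.congr fun k => norm_sub_rev _ _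
    refine (null_add' (n := nseq)
      (f := fun k => Φ (y p - star (y q)) k - (Φ (y p) k - Φ (star (y q)) k))
      (g := fun k => star (Φ (y q) k) - Φ (star (y q)) k) h1 h2'').congr fun k => ?_
    congr 1
    abel
  -- the frequent lower bound at the distinguished index
  have hfr : ∃ᶠ k in atTop, ‖y i‖ - εm < ‖Φ (y i) k‖ := by
    rw [frequently_atTop]
    intro N
    obtain ⟨k, hk1, hk2⟩ := LS_freq (fun k => norm_nonneg _) (hΦb (y i)) hεm N
    exact ⟨k, hk1, by rwa [LSall] at hk2⟩
  obtain ⟨k₀, hfr₀, ha₀, hb₀, hc₀, hd₀, he₀⟩ :=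
    (hfr.and_eventually (heva.and (hevb.and (hevc.and (hevd.and heve))))).exists
  have hdiv : ∀ c : ℝ, c/((m:ℝ)+1) = c*εm := fun c => by rw [hεmdef]; ring
  refine ⟨nseq k₀, hposn k₀, fun p => Φ (y p) k₀, ?_, ?_, ?_, ?_, ?_, ?_⟩
  · intro p
    rw [hdiv]
    have := ha₀ p
    have := T1a p
    linarith
  · intro p q r
    rw [hdiv]
    have := hb₀ p q r
    have := T2 p q r
    linarith
  · intro p q r
    rw [hdiv]
    have h1 := hc₀ p q r
    have h2 := T3 p q r
    have h3 : (2 + ‖d ↑q‖ + ‖d ↑r‖)*εm + 2*εm ≤ (5 + ‖d ↑q‖ + ‖d ↑r‖)*εm := by nlinarith [hεm.le]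
    linarith
  · intro t p q
    rw [hdiv]
    have h1 := hd₀ t p q
    have h2 := T4 (e ↑t) p q
    have h3 : (1 + ‖e ↑t‖)*εm + 2*εm = (3 + ‖e ↑t‖)*εm := by ring
    linarith
  · intro p q
    rw [hdiv]
    have h1 := he₀ p q
    have h2 := T5 p q
    linarith
  · rw [hdiv]
    have h1 := T1b i
    linarith

set_option maxHeartbeats 1600000 in
/-- If every finite subset of the separable C*-algebra `A` can, within any `ε > 0` and with
respect to faithful representations on a common Hilbert space, be approximated by elements
of some MF algebra, then `A` itself is an MF algebra. -/
theorem isMF_of_approximation_by_MF_algebras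
    (A : Type) [NonUnitalCStarAlgebra A] [SeparableSpace A]
    (h : ∀ (n : ℕ) (x : Fin n → A) (ε : ℝ), 0 < ε →
      ∃ (A₁ : Type) (i₁ : NonUnitalCStarAlgebra A₁),
        @IsMF A₁ i₁.toNonUnitalNormedRing i₁.toStarRing i₁.toNormedSpace ∧
        ∃ y : Fin n → A₁,
          ∃ (H : Type) (iH : NormedAddCommGroup H)
            (iH₂ : @InnerProductSpace ℂ H Complex.instRCLike
              iH.toSeminormedAddCommGroup)
            (iH₃ : CompleteSpace H),
            @CloseReps A A₁ _ i₁ H iH iH₂ iH₃ n x y ε) :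
    IsMF A := by
  classical
  have hne : Nonempty A := ⟨0⟩
  set d : ℕ → A := denseSeq A with hddef
  have hdense : DenseRange d := denseRange_denseSeq A
  set e : ℕ → ℂ := denseSeq ℂ with hedef
  have hedense : DenseRange e := denseRange_denseSeq ℂ
  obtain ⟨s, hs, V, P1, P2, P3, P4, P5, P6⟩ :
      ∃ (s : ∀ m : ℕ, Fin (m+1) → ℕ), (∀ m i, 0 < s m i) ∧
      ∃ V : ∀ (m : ℕ) (i : Fin (m+1)), Fin (m+1) → MatCStar (s m i),
      (∀ m i p, ‖V m i p‖ ≤ ‖d ↑p‖ + 2/((m:ℝ)+1)) ∧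
      (∀ m i p q r, ‖V m i p - V m i q - V m i r‖ ≤ ‖d ↑p - d ↑q - d ↑r‖ + 6/((m:ℝ)+1)) ∧
      (∀ m i p q r, ‖V m i p - V m i q * V m i r‖ ≤ ‖d ↑p - d ↑q * d ↑r‖
        + (5 + ‖d ↑q‖ + ‖d ↑r‖)/((m:ℝ)+1)) ∧
      (∀ m i, ∀ t p q : Fin (m+1), ‖V m i p - e ↑t • V m i q‖ ≤ ‖d ↑p - e ↑t • d ↑q‖
        + (3 + ‖e ↑t‖)/((m:ℝ)+1)) ∧
      (∀ m i p q, ‖V m i p - star (V m i q)‖ ≤ ‖d ↑p - star (d ↑q)‖ + 4/((m:ℝ)+1)) ∧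
      (∀ (m : ℕ) (i : Fin (m+1)), ‖d ↑i‖ - 2/((m:ℝ)+1) ≤ ‖V m i i‖) := by
    have main := stage_lemma A d e h
    choose s hs V P1 P2 P3 P4 P5 P6 using main
    exact ⟨s, hs, V, P1, P2, P3, P4, P5, P6⟩
  -- nearest-point projections onto the dense sequence
  have hjj' : ∀ (m : ℕ) (a : A), ∃ j : Fin (m+1), ∀ j' : Fin (m+1), ‖d ↑j - a‖ ≤ ‖d ↑j' - a‖ :=
    fun m a => Finite.exists_min (fun j : Fin (m+1) => ‖d ↑j - a‖)
  choose jj hjj using hjj'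
  have hδd0 : ∀ m a, ‖d ↑(jj m a) - a‖ ≤ ‖d 0 - a‖ := by
    intro m a
    have h1 := hjj m a ⟨0, Nat.succ_pos m⟩
    simpa using h1
  have hδtend : ∀ a : A, Tendsto (fun m => ‖d ↑(jj m a) - a‖) atTop (nhds 0) := by
    intro a
    rw [Metric.tendsto_atTop]
    intro ε hε
    obtain ⟨j₀, hj₀⟩ := Metric.denseRange_iff.1 hdense a ε hε
    refine ⟨j₀, fun m hm => ?_⟩
    rw [Real.dist_eq, sub_zero, abs_of_nonneg (norm_nonneg _)]
    have hlt : (j₀ : ℕ) < m+1 := by omega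
    calc ‖d ↑(jj m a) - a‖ ≤ ‖d ↑(⟨j₀, hlt⟩ : Fin (m+1)) - a‖ := hjj m a _
      _ = dist a (d j₀) := by rw [dist_comm, dist_eq_norm]
      _ < ε := hj₀
  have hnd : ∀ (m : ℕ) (a : A), ‖d ↑(jj m a)‖ ≤ ‖a‖ + ‖d 0 - a‖ := by
    intro m a
    calc ‖d ↑(jj m a)‖ = ‖(d ↑(jj m a) - a) + a‖ := by rw [sub_add_cancel]
      _ ≤ ‖d ↑(jj m a) - a‖ + ‖a‖ := norm_add_le _ _
      _ ≤ ‖a‖ + ‖d 0 - a‖ := by linarith [hδd0 m a]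
  -- the stage of a coordinate
  set η : ℕ → ℕ := fun t => max (Nat.unpair t).1 (Nat.unpair t).2 with hηdef
  have hημ : ∀ t, min (Nat.unpair t).1 (Nat.unpair t).2 < η t + 1 := fun t => by
    show min (Nat.unpair t).1 (Nat.unpair t).2 < max (Nat.unpair t).1 (Nat.unpair t).2 + 1
    omega
  set ι : (t : ℕ) → Fin (η t + 1) := fun t => ⟨min (Nat.unpair t).1 (Nat.unpair t).2, hημ t⟩
    with hιdef
  have hpairlt : ∀ a b : ℕ, Nat.pair a b < (max a b + 1)^2 := by
    intro a b
    rw [Nat.pair]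
    split
    · rename_i hab
      have : max a b = b := max_eq_right (le_of_lt hab)
      rw [this]
      nlinarith
    · rename_i hab
      push_neg at hab
      have : max a b = a := max_eq_left hab
      rw [this]
      nlinarith
  have hηtend : Tendsto η atTop atTop := by
    rw [tendsto_atTop_atTop]
    intro M
    refine ⟨(M+1)^2, fun t ht => ?_⟩
    by_contra hcon
    push_neg at hcon
    have h2 : t < (η t + 1)^2 := by
      conv_lhs => rw [← Nat.pair_unpair t]
      exact hpairlt (Nat.unpair t).1 (Nat.unpair t).2
    have h3 : (η t + 1)^2 ≤ (M+1)^2 := Nat.pow_le_pow_left (by omega) 2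
    omega
  -- vanishing scalar errors
  have hεtend : ∀ c : ℝ, Tendsto (fun m : ℕ => c/((m:ℝ)+1)) atTop (nhds 0) := by
    intro c
    have h1 := tendsto_one_div_add_atTop_nhds_zero_nat.const_mul c
    rw [mul_zero] at h1
    refine h1.congr fun m => ?_
    rw [mul_one_div]
  have hεle : ∀ (c : ℝ) (m : ℕ), 0 ≤ c → c/((m:ℝ)+1) ≤ c := fun c m hc =>
    div_le_self hc (by have := Nat.cast_nonneg (α := ℝ) m; linarith)
  have hεmono : ∀ (c₁ c₂ : ℝ) (m : ℕ), c₁ ≤ c₂ → c₁/((m:ℝ)+1) ≤ c₂/((m:ℝ)+1) := by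
    intro c₁ c₂ m hc
    gcongr
  refine ⟨fun t => s (η t) (ι t), fun t => hs _ _,
    fun a t => V (η t) (ι t) (jj (η t) a), ?_, ?_, ?_, ?_, ?_, ?_⟩
  · -- boundedness
    intro a
    refine ⟨‖a‖ + ‖d 0 - a‖ + 2, fun t => ?_⟩
    have h1 := P1 (η t) (ι t) (jj (η t) a)
    have h2 := hnd (η t) a
    have h3 : 2/((η t : ℝ)+1) ≤ 2 := hεle 2 (η t) (by norm_num)
    calc ‖V (η t) (ι t) (jj (η t) a)‖ ≤ ‖d ↑(jj (η t) a)‖ + 2/((η t : ℝ)+1) := h1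
      _ ≤ ‖a‖ + ‖d 0 - a‖ + 2 := by linarith
  · -- additivity
    intro a b
    show Tendsto (fun t => ‖V (η t) (ι t) (jj (η t) (a+b))
      - (V (η t) (ι t) (jj (η t) a) + V (η t) (ι t) (jj (η t) b))‖) atTop (nhds 0)
    have hg : Tendsto (fun m : ℕ => ‖d ↑(jj m (a+b)) - (a+b)‖ + ‖d ↑(jj m a) - a‖
        + ‖d ↑(jj m b) - b‖ + 6/((m:ℝ)+1)) atTop (nhds 0) := by
      have := (((hδtend (a+b)).add (hδtend a)).add (hδtend b)).add (hεtend 6)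
      simpa using this
    refine squeeze_zero (fun t => norm_nonneg _) (fun t => ?_) (hg.comp hηtend)
    set m := η t
    set p := jj m (a+b)
    set q := jj m a
    set r := jj m b
    have h1 := P2 m (ι t) p q r
    have h2 : ‖d ↑p - d ↑q - d ↑r‖ ≤ ‖d ↑p - (a+b)‖ + ‖d ↑q - a‖ + ‖d ↑r - b‖ := by
      have heq : d ↑p - d ↑q - d ↑r = (d ↑p - (a+b)) - (d ↑q - a) - (d ↑r - b) := by abel
      rw [heq]
      calc ‖_ - _ - _‖ ≤ ‖(d ↑p - (a+b)) - (d ↑q - a)‖ + ‖d ↑r - b‖ := norm_sub_le _ _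
        _ ≤ ‖d ↑p - (a+b)‖ + ‖d ↑q - a‖ + ‖d ↑r - b‖ := by
          linarith [norm_sub_le (d ↑p - (a+b)) (d ↑q - a)]
    have h3 : V m (ι t) p - (V m (ι t) q + V m (ι t) r)
        = V m (ι t) p - V m (ι t) q - V m (ι t) r := by abel
    rw [h3]
    exact le_trans h1 (by simp only [Function.comp]; linarith)
  · -- multiplicativity
    intro a b
    show Tendsto (fun t => ‖V (η t) (ι t) (jj (η t) (a*b))
      - V (η t) (ι t) (jj (η t) a) * V (η t) (ι t) (jj (η t) b)‖) atTop (nhds 0)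
    have hg : Tendsto (fun m : ℕ => ‖d ↑(jj m (a*b)) - (a*b)‖ + ‖a‖ * ‖d ↑(jj m b) - b‖
        + (‖b‖ + ‖d 0 - b‖) * ‖d ↑(jj m a) - a‖
        + (5 + (‖a‖ + ‖d 0 - a‖) + (‖b‖ + ‖d 0 - b‖))/((m:ℝ)+1)) atTop (nhds 0) := by
      have h1 := ((hδtend (a*b)).add ((hδtend b).const_mul ‖a‖)).add
        (((hδtend a).const_mul (‖b‖ + ‖d 0 - b‖)).add
          (hεtend (5 + (‖a‖ + ‖d 0 - a‖) + (‖b‖ + ‖d 0 - b‖))))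
      simp only [mul_zero, add_zero, zero_add] at h1
      refine h1.congr fun m => ?_
      ring
    refine squeeze_zero (fun t => norm_nonneg _) (fun t => ?_) (hg.comp hηtend)
    set m := η t
    set p := jj m (a*b)
    set q := jj m a
    set r := jj m b
    have h1 := P3 m (ι t) p q r
    have h2 : ‖d ↑p - d ↑q * d ↑r‖ ≤ ‖d ↑p - (a*b)‖ + ‖a‖ * ‖d ↑r - b‖
        + (‖b‖ + ‖d 0 - b‖) * ‖d ↑q - a‖ := by
      have heq : d ↑p - d ↑q * d ↑r
          = (d ↑p - a*b) - (a * (d ↑r - b) + (d ↑q - a) * d ↑r) := by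
        rw [mul_sub, sub_mul]; abel
      rw [heq]
      have e1 : ‖a * (d ↑r - b)‖ ≤ ‖a‖ * ‖d ↑r - b‖ := norm_mul_le _ _
      have e2 : ‖(d ↑q - a) * d ↑r‖ ≤ ‖d ↑q - a‖ * ‖d ↑r‖ := norm_mul_le _ _
      have e3 : ‖d ↑r‖ ≤ ‖b‖ + ‖d 0 - b‖ := hnd m b
      have e4 : ‖d ↑q - a‖ * ‖d ↑r‖ ≤ (‖b‖ + ‖d 0 - b‖) * ‖d ↑q - a‖ := by
        rw [mul_comm]
        exact mul_le_mul_of_nonneg_right e3 (norm_nonneg _)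
      calc ‖_ - _‖ ≤ ‖d ↑p - a*b‖ + ‖a * (d ↑r - b) + (d ↑q - a) * d ↑r‖ := norm_sub_le _ _
        _ ≤ ‖d ↑p - a*b‖ + (‖a * (d ↑r - b)‖ + ‖(d ↑q - a) * d ↑r‖) := by
          linarith [norm_add_le (a * (d ↑r - b)) ((d ↑q - a) * d ↑r)]
        _ ≤ _ := by linarith
    have h3 : (5 + ‖d ↑q‖ + ‖d ↑r‖)/((m:ℝ)+1)
        ≤ (5 + (‖a‖ + ‖d 0 - a‖) + (‖b‖ + ‖d 0 - b‖))/((m:ℝ)+1) := by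
      refine hεmono _ _ m ?_
      linarith [hnd m a, hnd m b]
    exact le_trans h1 (by simp only [Function.comp]; linarith)
  · -- scalar multiplication
    intro c a
    show Tendsto (fun t => ‖V (η t) (ι t) (jj (η t) (c • a))
      - c • V (η t) (ι t) (jj (η t) a)‖) atTop (nhds 0)
    rw [Metric.tendsto_atTop]
    intro ε' hε'
    set K : ℝ := ‖a‖ + (‖a‖ + ‖d 0 - a‖ + 2) with hKdef
    have hK0 : 0 ≤ K := by
      rw [hKdef]
      have := norm_nonneg a
      have := norm_nonneg (d 0 - a)
      linarith
    obtain ⟨t₀, ht₀⟩ := Metric.denseRange_iff.1 hedense c (min 1 (ε'/(2*(K+1))))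
      (lt_min one_pos (by positivity))
    have hθ1 : ‖e t₀ - c‖ < 1 := by
      have := ht₀
      rw [dist_comm, dist_eq_norm] at this
      exact lt_of_lt_of_le this (min_le_left _ _)
    have hθ2 : ‖e t₀ - c‖ < ε'/(2*(K+1)) := by
      have := ht₀
      rw [dist_comm, dist_eq_norm] at this
      exact lt_of_lt_of_le this (min_le_right _ _)
    have hec : ‖e t₀‖ ≤ ‖c‖ + 1 := by
      calc ‖e t₀‖ = ‖(e t₀ - c) + c‖ := by rw [sub_add_cancel]
        _ ≤ ‖e t₀ - c‖ + ‖c‖ := norm_add_le _ _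
        _ ≤ ‖c‖ + 1 := by linarith
    have hg : Tendsto (fun m : ℕ => ‖d ↑(jj m (c • a)) - c • a‖
        + (‖c‖+1) * ‖d ↑(jj m a) - a‖ + (4 + ‖c‖)/((m:ℝ)+1)) atTop (nhds 0) := by
      have h1 := ((hδtend (c • a)).add ((hδtend a).const_mul (‖c‖+1))).add (hεtend (4 + ‖c‖))
      simp only [mul_zero, add_zero, zero_add] at h1
      exact h1
    obtain ⟨M₁, hM₁⟩ := (Metric.tendsto_atTop.1 hg) (ε'/2) (by positivity)
    obtain ⟨N, hN⟩ := (tendsto_atTop_atTop.1 hηtend) (max t₀ M₁)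
    refine ⟨N, fun t ht => ?_⟩
    have hm := hN t ht
    set m := η t
    have hmM₁ : M₁ ≤ m := le_trans (le_max_right _ _) hm
    have hmt₀ : (t₀ : ℕ) < m + 1 := by
      have := le_trans (le_max_left t₀ M₁) hm
      omega
    set p := jj m (c • a)
    set q := jj m a
    have h1 := P4 m (ι t) ⟨t₀, hmt₀⟩ p q
    simp only [Fin.val_mk] at h1
    have h2 : ‖d ↑p - e t₀ • d ↑q‖ ≤ ‖d ↑p - c • a‖ + ‖e t₀ - c‖ * ‖a‖
        + ‖e t₀‖ * ‖d ↑q - a‖ := by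
      have heq : d ↑p - e t₀ • d ↑q
          = (d ↑p - c • a) - ((e t₀ - c) • a) - e t₀ • (d ↑q - a) := by
        have h₁ : (e t₀ - c) • a = e t₀ • a - c • a := sub_smul (R := ℂ) (M := A) _ _ _
        have h₂ : e t₀ • (d ↑q - a) = e t₀ • d ↑q - e t₀ • a := smul_sub (e t₀) (d ↑q) a
        rw [h₁, h₂]; abel
      rw [heq]
      have e1 : ‖(e t₀ - c) • a‖ = ‖e t₀ - c‖ * ‖a‖ := norm_smul (α := ℂ) (β := A) _ _
      have e2 : ‖e t₀ • (d ↑q - a)‖ = ‖e t₀‖ * ‖d ↑q - a‖ := norm_smul (α := ℂ) (β := A) _ _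
      calc ‖_ - _ - _‖ ≤ ‖(d ↑p - c • a) - ((e t₀ - c) • a)‖ + ‖e t₀ • (d ↑q - a)‖ :=
          norm_sub_le _ _
        _ ≤ ‖d ↑p - c • a‖ + ‖(e t₀ - c) • a‖ + ‖e t₀ • (d ↑q - a)‖ := by
          linarith [norm_sub_le (d ↑p - c • a) ((e t₀ - c) • a)]
        _ = _ := by rw [e1, e2]
    have h3 : ‖V m (ι t) p - c • V m (ι t) q‖
        ≤ ‖V m (ι t) p - e t₀ • V m (ι t) q‖ + ‖e t₀ - c‖ * ‖V m (ι t) q‖ := by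
      have heq : V m (ι t) p - c • V m (ι t) q
          = (V m (ι t) p - e t₀ • V m (ι t) q) + (e t₀ - c) • V m (ι t) q := by
        have h₁ : (e t₀ - c) • V m (ι t) q = e t₀ • V m (ι t) q - c • V m (ι t) q :=
          sub_smul (R := ℂ) (M := MatCStar (s m (ι t))) _ _ _
        rw [h₁]; abel
      rw [heq]
      calc ‖_ + _‖ ≤ ‖V m (ι t) p - e t₀ • V m (ι t) q‖ + ‖(e t₀ - c) • V m (ι t) q‖ :=
          norm_add_le _ _
        _ ≤ _ := by
          rw [norm_smul (α := ℂ) (β := MatCStar (s m (ι t))) (e t₀ - c) (V m (ι t) q)]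
    have h4 : ‖V m (ι t) q‖ ≤ ‖a‖ + ‖d 0 - a‖ + 2 := by
      have hP := P1 m (ι t) q
      have := hnd m a
      have h5 : 2/((m:ℝ)+1) ≤ 2 := hεle 2 m (by norm_num)
      linarith
    have h6 : (3 + ‖e t₀‖)/((m:ℝ)+1) ≤ (4 + ‖c‖)/((m:ℝ)+1) := hεmono _ _ m (by linarith)
    have h7 : ‖e t₀‖ * ‖d ↑q - a‖ ≤ (‖c‖+1) * ‖d ↑q - a‖ :=
      mul_le_mul_of_nonneg_right hec (norm_nonneg _)
    have h8 : ‖e t₀ - c‖ * ‖a‖ + ‖e t₀ - c‖ * ‖V m (ι t) q‖ ≤ ε'/2 := by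
      have e1 : ‖e t₀ - c‖ * ‖a‖ + ‖e t₀ - c‖ * ‖V m (ι t) q‖ ≤ ‖e t₀ - c‖ * K := by
        rw [hKdef]
        have := mul_le_mul_of_nonneg_left h4 (norm_nonneg (e t₀ - c))
        nlinarith [norm_nonneg (e t₀ - c)]
      have e2 : ‖e t₀ - c‖ * K ≤ ε'/(2*(K+1)) * K :=
        mul_le_mul_of_nonneg_right hθ2.le hK0
      have e3 : ε'/(2*(K+1)) * K ≤ ε'/2 := by
        rw [div_mul_eq_mul_div, div_le_div_iff₀ (by positivity) (by norm_num)]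
        nlinarith
      exact le_trans e1 (le_trans e2 e3)
    have h9 := hM₁ m hmM₁
    rw [Real.dist_eq, sub_zero, abs_of_nonneg (by positivity)] at h9
    rw [Real.dist_eq, sub_zero, abs_of_nonneg (norm_nonneg _)]
    calc ‖V m (ι t) p - c • V m (ι t) q‖
        ≤ ‖V m (ι t) p - e t₀ • V m (ι t) q‖ + ‖e t₀ - c‖ * ‖V m (ι t) q‖ := h3
      _ ≤ (‖d ↑p - e t₀ • d ↑q‖ + (3 + ‖e t₀‖)/((m:ℝ)+1)) + ‖e t₀ - c‖ * ‖V m (ι t) q‖ := by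
          linarith
      _ ≤ ‖d ↑p - c • a‖ + (‖c‖+1) * ‖d ↑q - a‖ + (4 + ‖c‖)/((m:ℝ)+1)
          + (‖e t₀ - c‖ * ‖a‖ + ‖e t₀ - c‖ * ‖V m (ι t) q‖) := by linarith
      _ < ε'/2 + ε'/2 := by linarith
      _ = ε' := add_halves ε'
  · -- star
    intro a
    show Tendsto (fun t => ‖V (η t) (ι t) (jj (η t) (star a))
      - star (V (η t) (ι t) (jj (η t) a))‖) atTop (nhds 0)
    have hg : Tendsto (fun m : ℕ => ‖d ↑(jj m (star a)) - star a‖ + ‖d ↑(jj m a) - a‖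
        + 4/((m:ℝ)+1)) atTop (nhds 0) := by
      have := ((hδtend (star a)).add (hδtend a)).add (hεtend 4)
      simpa using this
    refine squeeze_zero (fun t => norm_nonneg _) (fun t => ?_) (hg.comp hηtend)
    set m := η t
    set p := jj m (star a)
    set q := jj m a
    have h1 := P5 m (ι t) p q
    have h2 : ‖d ↑p - star (d ↑q)‖ ≤ ‖d ↑p - star a‖ + ‖d ↑q - a‖ := by
      have heq : d ↑p - star (d ↑q) = (d ↑p - star a) - star (d ↑q - a) := by
        rw [star_sub]; abel
      rw [heq]
      calc ‖_ - _‖ ≤ ‖d ↑p - star a‖ + ‖star (d ↑q - a)‖ := norm_sub_le _ _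
        _ = ‖d ↑p - star a‖ + ‖d ↑q - a‖ := by rw [norm_star]
    exact le_trans h1 (by simp only [Function.comp]; linarith)
  · -- injectivity
    intro a ha
    have ha' : Tendsto (fun t => ‖V (η t) (ι t) (jj (η t) a)‖) atTop (nhds 0) := ha
    have hvaleq : ∀ {m₁ m₂ : ℕ} (hm : m₁ = m₂), ((jj m₁ a : Fin (m₁+1)) : ℕ)
        = ((jj m₂ a : Fin (m₂+1)) : ℕ) := by
      intro m₁ m₂ hm
      subst hm
      rfl
    have key : ∀ m : ℕ, ‖a‖ ≤ ‖V (η (Nat.pair m ↑(jj m a))) (ι (Nat.pair m ↑(jj m a)))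
        (jj (η (Nat.pair m ↑(jj m a))) a)‖ + ‖d ↑(jj m a) - a‖ + 2/((m:ℝ)+1) := by
      intro m
      set t := Nat.pair m ↑(jj m a) with htdef
      have hu1 : (Nat.unpair t).1 = m := by rw [htdef, Nat.unpair_pair]
      have hu2 : (Nat.unpair t).2 = ↑(jj m a) := by rw [htdef, Nat.unpair_pair]
      have hle : (↑(jj m a) : ℕ) ≤ m := Nat.lt_succ_iff.mp (jj m a).isLt
      have hηeq : η t = m := by
        show max (Nat.unpair t).1 (Nat.unpair t).2 = m
        rw [hu1, hu2]
        exact max_eq_left hle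
      have hιval : ((ι t : Fin (η t + 1)) : ℕ) = ↑(jj m a) := by
        show min (Nat.unpair t).1 (Nat.unpair t).2 = _
        rw [hu1, hu2]
        exact min_eq_right hle
      have hιeq : jj (η t) a = ι t := by
        refine Fin.ext ?_
        rw [hιval]
        exact hvaleq hηeq
      have hP := P6 (η t) (ι t)
      rw [hιval] at hP
      have hεeq : (2:ℝ)/((η t : ℝ)+1) = 2/((m:ℝ)+1) := by rw [hηeq]
      rw [hεeq] at hP
      rw [hιeq]
      have hna : ‖a‖ ≤ ‖d ↑(jj m a)‖ + ‖d ↑(jj m a) - a‖ := by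
        calc ‖a‖ = ‖d ↑(jj m a) - (d ↑(jj m a) - a)‖ := by rw [sub_sub_cancel]
          _ ≤ _ := norm_sub_le _ _
      linarith [hP]
    have hcomp : Tendsto (fun m : ℕ => Nat.pair m ↑(jj m a)) atTop atTop :=
      tendsto_atTop_mono (fun m => Nat.left_le_pair m ↑(jj m a)) tendsto_id
    have h0 : Tendsto (fun m : ℕ => ‖V (η (Nat.pair m ↑(jj m a))) (ι (Nat.pair m ↑(jj m a)))
        (jj (η (Nat.pair m ↑(jj m a))) a)‖ + ‖d ↑(jj m a) - a‖ + 2/((m:ℝ)+1)) atTop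
        (nhds 0) := by
      have h1 := (ha'.comp hcomp).add ((hδtend a).add (hεtend 2))
      simp only [add_zero] at h1
      refine h1.congr fun m => ?_
      simp only [Function.comp]
      ring
    have hfin : ‖a‖ ≤ 0 := ge_of_tendsto' h0 key
    have := norm_nonneg a
    have : ‖a‖ = 0 := le_antisymm hfin (norm_nonneg a)
    exact norm_eq_zero.mp this
end
end
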